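/- arXiv:0810.2061 — 4 statements merged into one kernel-verified Lean document; each statement's English description precedes it below -/
import Mathlib

section
/- On finite processes (processes without replication), the congruence ≡D generated by the abelian monoid laws for parallel composition and the distribution law coincides with strong bisimilarity ~: for all finite processes F, F', we have F ≡D F' if and only if F ~ F'. -/
/-!
Soundness: `≡D` is itself a bisimulation, as both sides of each law have the same transitions
up to `≡D`.

Completeness: flatten finite processes into synchronisation trees and use the distribution law
to split every prefix `a.(G | a.G | ⋯ | a.G)` into `a.G | a.G | ⋯ | a.G`. Two bisimilar normal
forms agree up to reordering, by induction on size. Fire a component `c` of maximal size on one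
side, answered by `d` on the other; by induction the residuals agree. If `c ≠ d`, then, since
children are smaller than `c`, every answer changes the number of copies of `c` by at most one:
this forces the first side to be `c` alone and the second to be `d | ⋯ | d` with at least two
copies, and then `c = a.(G | a.G | ⋯ | a.G)` for the continuation `G` of `d`, which a normal form
excludes.
-/

namespace CCS

/-- Process terms over a set of actions `A`. -/
inductive Proc (A : Type) where
  | nil : Proc A
  | pre : A → Proc A → Proc A
  | par : Proc A → Proc A → Proc A
  | repl : A → Proc A → Proc A

namespace Proc

/-- Finite processes: no occurrence of replication. -/
def IsFin {A : Type} : Proc A → Prop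
  | nil => True
  | pre _ p => IsFin p
  | par p q => IsFin p ∧ IsFin q
  | repl _ _ => False

/-- Processes of the calculus: replication is applied only to prefixed
finite processes, at top level. -/
def Wf {A : Type} : Proc A → Prop
  | nil => True
  | pre _ p => IsFin p
  | par p q => Wf p ∧ Wf q
  | repl _ p => IsFin p

/-- Size: the number of prefixes. -/
def size {A : Type} : Proc A → ℕ
  | nil => 0
  | pre _ p => size p + 1
  | par p q => size p + size q
  | repl _ p => size p + 1

/-- `reps n p` is the parallel composition of `n` copies of `p`. -/
def reps {A : Type} : ℕ → Proc A → Proc A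
  | 0, _ => nil
  | n+1, p => par p (reps n p)

/-- `bang F` is `!F`: for `F = α₁.F₁ | ... | αk.Fk` it is `!α₁.F₁ | ... | !αk.Fk`. -/
def bang {A : Type} : Proc A → Proc A
  | nil => nil
  | pre a p => repl a p
  | par p q => par (bang p) (bang q)
  | repl a p => repl a p

end Proc

/-- The labelled transition system (no synchronisation). -/
inductive Step {A : Type} : Proc A → A → Proc A → Prop where
  | pre {a : A} {p : Proc A} : Step (Proc.pre a p) a p
  | repl {a : A} {p : Proc A} :
      Step (Proc.repl a p) a (Proc.par (Proc.repl a p) p)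
  | parL {p : Proc A} {a : A} {p' : Proc A} (q : Proc A) :
      Step p a p' → Step (Proc.par p q) a (Proc.par p' q)
  | parR {q : Proc A} {a : A} {q' : Proc A} (p : Proc A) :
      Step q a q' → Step (Proc.par p q) a (Proc.par p q')

/-- Strong bisimulations. -/
def IsBisim {A : Type} (R : Proc A → Proc A → Prop) : Prop :=
  Symmetric R ∧
    ∀ p q, R p q → ∀ a p', Step p a p' → ∃ q', Step q a q' ∧ R p' q'

/-- Strong bisimilarity `~`: the greatest strong bisimulation. -/
def Bisim {A : Type} (p q : Proc A) : Prop :=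
  ∃ R, IsBisim R ∧ R p q

/-- The congruence `≡D`: the smallest congruence generated by the abelian
monoid laws for parallel composition (neutral element `0`) and the
distribution law `α.(F | α.F | ... | α.F) = α.F | α.F | ... | α.F`
(with as many occurrences of `F` on both sides). -/
inductive EqD {A : Type} : Proc A → Proc A → Prop where
  | refl (p : Proc A) : EqD p p
  | symm {p q : Proc A} : EqD p q → EqD q p
  | trans {p q r : Proc A} : EqD p q → EqD q r → EqD p r
  | parComm (p q : Proc A) : EqD (Proc.par p q) (Proc.par q p)
  | parAssoc (p q r : Proc A) :
      EqD (Proc.par (Proc.par p q) r) (Proc.par p (Proc.par q r))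
  | parNil (p : Proc A) : EqD (Proc.par p Proc.nil) p
  | distr (a : A) (F : Proc A) (n : ℕ) (hF : F.IsFin) :
      EqD (Proc.pre a (Proc.par F (Proc.reps n (Proc.pre a F))))
          (Proc.reps (n + 1) (Proc.pre a F))
  | congPre (a : A) {p q : Proc A} : EqD p q → EqD (Proc.pre a p) (Proc.pre a q)
  | congPar {p p' q q' : Proc A} :
      EqD p p' → EqD q q' → EqD (Proc.par p q) (Proc.par p' q')
  | congRepl (a : A) {p q : Proc A} : EqD p q → EqD (Proc.repl a p) (Proc.repl a q)

/-- Finite (single-hole) contexts `D ::= [] | α.D | D|F`. -/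
inductive FCtx (A : Type) where
  | hole : FCtx A
  | pre : A → FCtx A → FCtx A
  | par : FCtx A → Proc A → FCtx A

/-- Filling the hole of a finite context. -/
def FCtx.fill {A : Type} : FCtx A → Proc A → Proc A
  | .hole, p => p
  | .pre a d, p => Proc.pre a (d.fill p)
  | .par d f, p => Proc.par (d.fill p) f

/-- Well-formedness of a finite context: the processes placed in parallel
are finite. -/
def FCtx.Wf {A : Type} : FCtx A → Prop
  | .hole => True
  | .pre _ d => d.Wf
  | .par d f => d.Wf ∧ f.IsFin

/-- Single-hole contexts `C ::= D | !α.D | C|P` (the hole never occurs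
directly under a replication). -/
inductive Ctx (A : Type) where
  | ofD : FCtx A → Ctx A
  | repl : A → FCtx A → Ctx A
  | par : Ctx A → Proc A → Ctx A

/-- Filling the hole of a context. -/
def Ctx.fill {A : Type} : Ctx A → Proc A → Proc A
  | .ofD d, p => d.fill p
  | .repl a d, p => Proc.repl a (d.fill p)
  | .par c q, p => Proc.par (c.fill p) q

/-- Well-formedness of a context. -/
def Ctx.Wf {A : Type} : Ctx A → Prop
  | .ofD d => d.Wf
  | .repl _ d => d.Wf
  | .par c p => c.Wf ∧ p.Wf

/-- `k` consecutive transitions. -/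
inductive NSteps {A : Type} : Proc A → ℕ → Proc A → Prop where
  | zero (p : Proc A) : NSteps p 0 p
  | succ {p : Proc A} {a : A} {p' : Proc A} {k : ℕ} {q : Proc A} :
      Step p a p' → NSteps p' k q → NSteps p (k + 1) q

/-- `P ⇒k Q`: `k` transitions from `P` reach a process `≡D Q`. -/
def Reduct {A : Type} (p : Proc A) (k : ℕ) (q : Proc A) : Prop :=
  ∃ p', NSteps p k p' ∧ EqD p' q

/-- `TopRepl S a G` holds when `!a.G` is one of the (top-level) replicated
parallel components of `S`. -/
inductive TopRepl {A : Type} : Proc A → A → Proc A → Prop where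
  | repl (a : A) (p : Proc A) : TopRepl (Proc.repl a p) a p
  | parL {p : Proc A} {a : A} {r : Proc A} (q : Proc A) :
      TopRepl p a r → TopRepl (Proc.par p q) a r
  | parR {q : Proc A} {a : A} {r : Proc A} (p : Proc A) :
      TopRepl q a r → TopRepl (Proc.par p q) a r

/-- `S` has only replicated components: `S = ∏i !αi.Si`. -/
def ReplOnly {A : Type} : Proc A → Prop
  | .nil => True
  | .pre _ _ => False
  | .par p q => ReplOnly p ∧ ReplOnly q
  | .repl _ p => p.IsFin

/-- `S ⫫ F` : for no component `!αi.Si` of `S` and no `k` do we have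
`F ⇒k αi.Si`. -/
def Dis {A : Type} (S F : Proc A) : Prop :=
  ∀ a G, TopRepl S a G → ∀ k, ¬ Reduct F k (Proc.pre a G)

/-- `S ▷ R` : there is `k > 0` with `S ⇒k S | R`. -/
def Purg {A : Type} (S R : Proc A) : Prop :=
  ∃ k, 0 < k ∧ Reduct S k (Proc.par S R)

/-- A process is a seed if no (well-formed) process of strictly smaller
size is bisimilar to it. -/
def IsSeed {A : Type} (p : Proc A) : Prop :=
  p.Wf ∧ ∀ q : Proc A, q.Wf → Bisim q p → p.size ≤ q.size

/-- The rewriting relation `⤳_T` (first argument), defined modulo `≡D` by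
the axioms (B1) `C[α.F] ⤳_{!α.F|F'} C[0]` and (B2) `!α.F | !α.F | P ⤳_Q !α.F | P`. -/
inductive Rw {A : Type} : Proc A → Proc A → Proc A → Prop where
  | B1 {a : A} {F F' : Proc A} (C : Ctx A) :
      F.IsFin → F'.Wf → C.Wf →
      Rw (Proc.par (Proc.repl a F) F') (C.fill (Proc.pre a F)) (C.fill Proc.nil)
  | B2 {a : A} {F P Q : Proc A} :
      F.IsFin → P.Wf → Q.Wf →
      Rw Q (Proc.par (Proc.repl a F) (Proc.par (Proc.repl a F) P))
           (Proc.par (Proc.repl a F) P)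
  | eqD {T T' P P' Q Q' : Proc A} :
      EqD T T' → EqD P P' → Rw T' P' Q' → EqD Q Q' → Rw T P Q

/-- `⤳*_T` : the reflexive transitive closure of `⤳_T`. -/
def RwStar {A : Type} (T : Proc A) : Proc A → Proc A → Prop :=
  Relation.ReflTransGen (Rw T)

/-- Convertibility `P ⋈ Q`: some process `T` satisfies `P ⤳*_T T` and `Q ⤳*_T T`. -/
def Convert {A : Type} (P Q : Proc A) : Prop :=
  ∃ T : Proc A, T.Wf ∧ RwStar T P T ∧ RwStar T Q T

/-- `∏i αi.Fi` for a list of prefixed components. -/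
def prodPre {A : Type} (l : List (A × Proc A)) : Proc A :=
  (l.map fun x => Proc.pre x.1 x.2).foldr Proc.par Proc.nil

/-- `∏i !αi.Fi` for a list of prefixed components. -/
def bangProd {A : Type} (l : List (A × Proc A)) : Proc A :=
  (l.map fun x => Proc.repl x.1 x.2).foldr Proc.par Proc.nil

end CCS

namespace CCS

variable {A : Type}

section Bisimilarity

variable {p q r : Proc A}

theorem Bisim.symm (h : Bisim p q) : Bisim q p :=
  let ⟨R, hR, hpq⟩ := h
  ⟨R, hR, hR.1 hpq⟩

theorem Bisim.trans (h₁ : Bisim p q) (h₂ : Bisim q r) : Bisim p r := by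
  obtain ⟨R₁, hR₁, hpq⟩ := h₁
  obtain ⟨R₂, hR₂, hqr⟩ := h₂
  refine ⟨fun x z => (∃ y, R₁ x y ∧ R₂ y z) ∨ (∃ y, R₂ x y ∧ R₁ y z),
    ⟨?_, ?_⟩, .inl ⟨q, hpq, hqr⟩⟩
  · rintro x z (⟨y, hxy, hyz⟩ | ⟨y, hxy, hyz⟩)
    · exact .inr ⟨y, hR₂.1 hyz, hR₁.1 hxy⟩
    · exact .inl ⟨y, hR₁.1 hyz, hR₂.1 hxy⟩
  · rintro x z (⟨y, hxy, hyz⟩ | ⟨y, hxy, hyz⟩) a x' hx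
    · obtain ⟨y', hy, hxy'⟩ := hR₁.2 x y hxy a x' hx
      obtain ⟨z', hz, hyz'⟩ := hR₂.2 y z hyz a y' hy
      exact ⟨z', hz, .inl ⟨y', hxy', hyz'⟩⟩
    · obtain ⟨y', hy, hxy'⟩ := hR₂.2 x y hxy a x' hx
      obtain ⟨z', hz, hyz'⟩ := hR₁.2 y z hyz a y' hy
      exact ⟨z', hz, .inr ⟨y', hxy', hyz'⟩⟩

theorem Bisim.exists_step (h : Bisim p q) {a : A} {p' : Proc A} (hp : Step p a p') :
    ∃ q', Step q a q' ∧ Bisim p' q' :=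
  let ⟨R, hR, hpq⟩ := h
  let ⟨q', hq, hpq'⟩ := hR.2 p q hpq a p' hp
  ⟨q', hq, R, hR, hpq'⟩

end Bisimilarity

def SimulatesUpToEqD (p q : Proc A) : Prop :=
  ∀ a p', Step p a p' → ∃ q', Step q a q' ∧ EqD p' q'

theorem SimulatesUpToEqD.trans {p q r : Proc A} (h₁ : SimulatesUpToEqD p q)
    (h₂ : SimulatesUpToEqD q r) : SimulatesUpToEqD p r := fun a p' hp =>
  let ⟨q', hq, hpq⟩ := h₁ a p' hp
  let ⟨r', hr, hqr⟩ := h₂ a q' hq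
  ⟨r', hr, hpq.trans hqr⟩

theorem step_reps_pre {a b : A} {F q : Proc A} {n : ℕ}
    (h : Step (Proc.reps n (Proc.pre a F)) b q) :
    b = a ∧ ∃ m, n = m + 1 ∧ EqD q (Proc.par F (Proc.reps m (Proc.pre a F))) := by
  induction n generalizing q with
  | zero => cases h
  | succ n ih =>
    cases h with
    | parL _ h => cases h; exact ⟨rfl, n, rfl, .refl _⟩
    | parR _ h =>
      obtain ⟨rfl, m, rfl, hq⟩ := ih h
      refine ⟨rfl, m + 1, rfl, (EqD.congPar (.refl _) hq).trans ?_⟩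
      exact (EqD.parAssoc _ _ _).symm.trans
        ((EqD.congPar (.parComm _ _) (.refl _)).trans (.parAssoc _ _ _))

section Laws

variable {p p' q q' r : Proc A}

theorem simulatesUpToEqD_par_comm : SimulatesUpToEqD (.par p q) (.par q p) := by
  rintro a _ (_ | _ | ⟨_, h⟩ | ⟨_, h⟩)
  · exact ⟨_, .parR _ h, .parComm _ _⟩
  · exact ⟨_, .parL _ h, .parComm _ _⟩

theorem simulatesUpToEqD_par_assoc :
    SimulatesUpToEqD (.par (.par p q) r) (.par p (.par q r)) := by
  rintro a _ (_ | _ | ⟨_, _ | _ | ⟨_, h⟩ | ⟨_, h⟩⟩ | ⟨_, h⟩)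
  · exact ⟨_, .parL _ h, .parAssoc _ _ _⟩
  · exact ⟨_, .parR _ (.parL _ h), .parAssoc _ _ _⟩
  · exact ⟨_, .parR _ (.parR _ h), .parAssoc _ _ _⟩

theorem simulatesUpToEqD_par_assoc_symm :
    SimulatesUpToEqD (.par p (.par q r)) (.par (.par p q) r) := by
  rintro a _ (_ | _ | ⟨_, h⟩ | ⟨_, _ | _ | ⟨_, h⟩ | ⟨_, h⟩⟩)
  · exact ⟨_, .parL _ (.parL _ h), (EqD.parAssoc _ _ _).symm⟩
  · exact ⟨_, .parL _ (.parR _ h), (EqD.parAssoc _ _ _).symm⟩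
  · exact ⟨_, .parR _ h, (EqD.parAssoc _ _ _).symm⟩

theorem simulatesUpToEqD_par_nil : SimulatesUpToEqD (.par p .nil) p := by
  rintro a _ (_ | _ | ⟨_, h⟩ | ⟨_, ⟨⟩⟩)
  exact ⟨_, h, .parNil _⟩

theorem simulatesUpToEqD_nil_par : SimulatesUpToEqD p (.par p .nil) :=
  fun _ _ h => ⟨_, .parL _ h, (EqD.parNil _).symm⟩

theorem simulatesUpToEqD_pre (a : A) (h : EqD p q) : SimulatesUpToEqD (.pre a p) (.pre a q) := by
  rintro b _ ⟨⟩
  exact ⟨_, .pre, h⟩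

theorem simulatesUpToEqD_repl (a : A) (h : EqD p q) :
    SimulatesUpToEqD (.repl a p) (.repl a q) := by
  rintro b _ ⟨⟩
  exact ⟨_, .repl, .congPar (.congRepl a h) h⟩

theorem SimulatesUpToEqD.par (hp : SimulatesUpToEqD p p') (hq : SimulatesUpToEqD q q')
    (ep : EqD p p') (eq : EqD q q') : SimulatesUpToEqD (.par p q) (.par p' q') := by
  rintro a _ (_ | _ | ⟨_, h⟩ | ⟨_, h⟩)
  · obtain ⟨_, h', e⟩ := hp a _ h
    exact ⟨_, .parL _ h', .congPar e eq⟩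
  · obtain ⟨_, h', e⟩ := hq a _ h
    exact ⟨_, .parR _ h', .congPar ep e⟩

end Laws

theorem simulatesUpToEqD_distr (a : A) (F : Proc A) (n : ℕ) :
    SimulatesUpToEqD (.pre a (.par F (Proc.reps n (.pre a F)))) (Proc.reps (n + 1) (.pre a F)) := by
  rintro b _ ⟨⟩
  exact ⟨_, .parL _ .pre, .refl _⟩

theorem simulatesUpToEqD_distr_symm (a : A) (F : Proc A) (n : ℕ) :
    SimulatesUpToEqD (Proc.reps (n + 1) (.pre a F)) (.pre a (.par F (Proc.reps n (.pre a F)))) := by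
  intro b _ h
  obtain ⟨rfl, m, hm, hq⟩ := step_reps_pre h
  obtain rfl : m = n := by omega
  exact ⟨_, .pre, hq⟩

theorem EqD.simulatesUpToEqD {p q : Proc A} (h : EqD p q) :
    SimulatesUpToEqD p q ∧ SimulatesUpToEqD q p := by
  induction h with
  | refl p => exact ⟨fun _ p' h => ⟨p', h, .refl _⟩, fun _ p' h => ⟨p', h, .refl _⟩⟩
  | symm _ ih => exact ih.symm
  | trans _ _ ih₁ ih₂ => exact ⟨ih₁.1.trans ih₂.1, ih₂.2.trans ih₁.2⟩
  | parComm => exact ⟨simulatesUpToEqD_par_comm, simulatesUpToEqD_par_comm⟩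
  | parAssoc => exact ⟨simulatesUpToEqD_par_assoc, simulatesUpToEqD_par_assoc_symm⟩
  | parNil => exact ⟨simulatesUpToEqD_par_nil, simulatesUpToEqD_nil_par⟩
  | distr a F n => exact ⟨simulatesUpToEqD_distr a F n, simulatesUpToEqD_distr_symm a F n⟩
  | congPre a h => exact ⟨simulatesUpToEqD_pre a h, simulatesUpToEqD_pre a h.symm⟩
  | congPar h₁ h₂ ih₁ ih₂ => exact ⟨ih₁.1.par ih₂.1 h₁ h₂, ih₁.2.par ih₂.2 h₁.symm h₂.symm⟩
  | congRepl a h => exact ⟨simulatesUpToEqD_repl a h, simulatesUpToEqD_repl a h.symm⟩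

theorem EqD.bisim {p q : Proc A} (h : EqD p q) : Bisim p q :=
  ⟨EqD, ⟨fun _ _ h => h.symm, fun _ _ h => h.simulatesUpToEqD.1⟩, h⟩

/-- Finite processes with parallel composition flattened: `node [(a₁, t₁), …, (aₖ, tₖ)]` stands
for `a₁.t₁ | ⋯ | aₖ.tₖ`. -/
inductive SyncTree (A : Type) where
  | node : List (A × SyncTree A) → SyncTree A

namespace SyncTree

def children : SyncTree A → List (A × SyncTree A)
  | node l => l

@[simp] theorem children_node (l : List (A × SyncTree A)) : (node l).children = l := rfl

@[simp] theorem node_children (t : SyncTree A) : node t.children = t := by cases t; rfl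

theorem sizeOf_lt_of_mem {l : List (A × SyncTree A)} {x : A × SyncTree A} (h : x ∈ l) :
    sizeOf x.2 < sizeOf (node l) := by
  have := List.sizeOf_lt_of_mem h
  cases x
  simp only [node.sizeOf_spec, Prod.mk.sizeOf_spec] at this ⊢
  omega

@[elab_as_elim]
theorem induction_on {motive : SyncTree A → Prop} :
    ∀ t, (∀ l, (∀ x ∈ l, motive x.2) → motive (node l)) → motive t
  | node l, h => h l fun x _ => induction_on x.2 h
decreasing_by exact sizeOf_lt_of_mem ‹_›

def size : SyncTree A → ℕ
  | node l => (l.map fun x => size x.2 + 1).sum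
decreasing_by exact sizeOf_lt_of_mem ‹_›

def toProc : SyncTree A → Proc A
  | node l => prodPre (l.map fun x => (x.1, toProc x.2))
decreasing_by exact sizeOf_lt_of_mem ‹_›

@[simp] theorem size_cons (x : A × SyncTree A) (l : List (A × SyncTree A)) :
    size (node (x :: l)) = size x.2 + 1 + size (node l) := by
  simp [size]

@[simp] theorem size_append (l₁ l₂ : List (A × SyncTree A)) :
    size (node (l₁ ++ l₂)) = size (node l₁) + size (node l₂) := by
  simp [size]

theorem size_congr_perm {l l' : List (A × SyncTree A)} (h : l.Perm l') :
    size (node l) = size (node l') := by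
  simp only [size]
  exact (h.map _).sum_eq

theorem size_lt_of_mem {l : List (A × SyncTree A)} {x : A × SyncTree A} (h : x ∈ l) :
    size x.2 < size (node l) := by
  simp only [size]
  exact List.le_sum_of_mem (List.mem_map_of_mem (f := fun x => size x.2 + 1) h)

theorem size_residual_lt {M r : List (A × SyncTree A)} {x : A × SyncTree A}
    (h : M.Perm (x :: r)) : size (node (x.2.children ++ r)) < size (node M) := by
  rw [size_congr_perm h, size_append, node_children, size_cons]
  omega

@[simp] theorem toProc_nil : toProc (node ([] : List (A × SyncTree A))) = .nil := by
  simp [toProc, prodPre]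

@[simp] theorem toProc_cons (x : A × SyncTree A) (l : List (A × SyncTree A)) :
    toProc (node (x :: l)) = .par (.pre x.1 (toProc x.2)) (toProc (node l)) := by
  simp [toProc, prodPre]

theorem toProc_replicate (n : ℕ) (x : A × SyncTree A) :
    toProc (node (List.replicate n x)) = Proc.reps n (.pre x.1 (toProc x.2)) := by
  induction n with
  | zero => simp [Proc.reps]
  | succ n ih => simp [List.replicate_succ, Proc.reps, ih]

theorem isFin_toProc (t : SyncTree A) : (toProc t).IsFin := by
  induction t using induction_on with
  | _ l ih =>
    induction l with
    | nil => simp [Proc.IsFin]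
    | cons x l ihl =>
      simp only [toProc_cons, Proc.IsFin]
      exact ⟨ih x (by simp), ihl fun y hy => ih y (by simp [hy])⟩

theorem eqD_toProc_append (l₁ l₂ : List (A × SyncTree A)) :
    EqD (toProc (node (l₁ ++ l₂))) (.par (toProc (node l₁)) (toProc (node l₂))) := by
  induction l₁ with
  | nil => simpa using ((EqD.parComm _ _).trans (.parNil _)).symm
  | cons x l ih =>
    simpa using (EqD.congPar (.refl _) ih).trans (EqD.parAssoc _ _ _).symm

theorem eqD_toProc_of_perm {l l' : List (A × SyncTree A)} (h : l.Perm l') :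
    EqD (toProc (node l)) (toProc (node l')) := by
  induction h with
  | nil => exact .refl _
  | cons x _ ih => simpa using EqD.congPar (.refl _) ih
  | swap x y l =>
    simpa using (EqD.parAssoc _ _ _).symm.trans
      ((EqD.congPar (.parComm _ _) (.refl _)).trans (.parAssoc _ _ _))
  | trans _ _ ih₁ ih₂ => exact ih₁.trans ih₂

theorem eqD_par_toProc (x : A × SyncTree A) (r : List (A × SyncTree A)) :
    EqD (.par (toProc x.2) (toProc (node r))) (toProc (node (x.2.children ++ r))) := by
  simpa using (eqD_toProc_append x.2.children r).symm

theorem exists_step_toProc_of_perm {l r : List (A × SyncTree A)} {x : A × SyncTree A}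
    (h : l.Perm (x :: r)) :
    ∃ q, Step (toProc (node l)) x.1 q ∧ EqD q (toProc (node (x.2.children ++ r))) := by
  obtain ⟨q, hq, e⟩ := (eqD_toProc_of_perm h).simulatesUpToEqD.2 x.1 _
    (by rw [toProc_cons]; exact .parL _ .pre)
  exact ⟨q, hq, e.symm.trans (eqD_par_toProc x r)⟩

theorem exists_perm_of_step_toProc {l : List (A × SyncTree A)} {a : A} {q : Proc A}
    (h : Step (toProc (node l)) a q) :
    ∃ x r, l.Perm (x :: r) ∧ x.1 = a ∧ EqD q (toProc (node (x.2.children ++ r))) := by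
  induction l generalizing q with
  | nil => rw [toProc_nil] at h; cases h
  | cons y l ih =>
    rw [toProc_cons] at h
    rcases h with _ | _ | ⟨_, ⟨⟩⟩ | ⟨_, h⟩
    · exact ⟨y, l, .refl _, rfl, eqD_par_toProc y l⟩
    · obtain ⟨x, r, hp, rfl, e⟩ := ih h
      refine ⟨x, y :: r, (hp.cons y).trans (.swap _ _ _), rfl, ?_⟩
      refine (EqD.congPar (.refl _) e).trans ?_
      simpa using eqD_toProc_of_perm (List.perm_middle (a := y) (l₁ := x.2.children) (l₂ := r)).symm

theorem exists_perm_cons_of_bisim {M N r : List (A × SyncTree A)} {x : A × SyncTree A}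
    (hB : Bisim (toProc (node M)) (toProc (node N))) (hx : M.Perm (x :: r)) :
    ∃ y s, N.Perm (y :: s) ∧ x.1 = y.1 ∧
      Bisim (toProc (node (x.2.children ++ r))) (toProc (node (y.2.children ++ s))) := by
  obtain ⟨p, hp, ep⟩ := exists_step_toProc_of_perm hx
  obtain ⟨q, hq, hpq⟩ := hB.exists_step hp
  obtain ⟨y, s, hy, hxy, eq⟩ := exists_perm_of_step_toProc hq
  exact ⟨y, s, hy, hxy.symm, ep.bisim.symm.trans (hpq.trans eq.bisim)⟩

variable [Countable A]

/-- An injective encoding of trees up to reordering of the children at every node; going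
through `ℕ` is what makes this nested recursion possible. -/
noncomputable def code : SyncTree A → ℕ
  | node l =>
    letI := Encodable.ofCountable A
    Encodable.encode (l.map fun x => (x.1, code x.2) : Multiset (A × ℕ))
decreasing_by exact sizeOf_lt_of_mem ‹_›

noncomputable def key (x : A × SyncTree A) : A × ℕ := (x.1, code x.2)

noncomputable def keys (l : List (A × SyncTree A)) : Multiset (A × ℕ) := l.map key

@[simp] theorem keys_cons (x : A × SyncTree A) (l : List (A × SyncTree A)) :
    keys (x :: l) = key x ::ₘ keys l := rfl

@[simp] theorem keys_append (l₁ l₂ : List (A × SyncTree A)) :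
    keys (l₁ ++ l₂) = keys l₁ + keys l₂ := by
  simp [keys]

@[simp] theorem keys_replicate (n : ℕ) (x : A × SyncTree A) :
    keys (List.replicate n x) = Multiset.replicate n (key x) := by
  simp [keys, Multiset.coe_replicate]

theorem keys_congr_perm {l l' : List (A × SyncTree A)} (h : l.Perm l') : keys l = keys l' :=
  Multiset.coe_eq_coe.2 (h.map key)

theorem mem_keys {l : List (A × SyncTree A)} {k : A × ℕ} :
    k ∈ keys l ↔ ∃ x ∈ l, key x = k := by
  simp [keys]

theorem code_eq_iff {t s : SyncTree A} : code t = code s ↔ keys t.children = keys s.children := by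
  cases t; cases s
  let _ := Encodable.ofCountable A
  simp only [code, children_node]
  exact Encodable.encode_injective.eq_iff

theorem exists_perm_of_keys_eq_cons {l : List (A × SyncTree A)} {k : A × ℕ}
    {m : Multiset (A × ℕ)} (h : keys l = k ::ₘ m) :
    ∃ y r, l.Perm (y :: r) ∧ key y = k ∧ keys r = m := by
  classical
  obtain ⟨y, hy, rfl⟩ := mem_keys.1 (h ▸ Multiset.mem_cons_self k m)
  have hp := List.perm_cons_erase hy
  refine ⟨y, l.erase y, hp, rfl, ?_⟩
  rwa [keys_congr_perm hp, keys_cons, Multiset.cons_inj_right] at h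

theorem size_eq_and_eqD_of_code_eq (t : SyncTree A) :
    ∀ s, code t = code s → size t = size s ∧ EqD (toProc t) (toProc s) := by
  induction t using induction_on with
  | _ l ih =>
    rintro ⟨l'⟩ h
    rw [code_eq_iff, children_node, children_node] at h
    induction l generalizing l' with
    | nil =>
      obtain rfl : l' = [] := by simpa [keys] using h.symm
      exact ⟨rfl, .refl _⟩
    | cons x r ihr =>
      obtain ⟨y, s, hp, hxy, hrs⟩ := exists_perm_of_keys_eq_cons (h.symm.trans (keys_cons x r))
      obtain ⟨ha, hc⟩ := Prod.mk.injEq _ _ _ _ ▸ hxy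
      obtain ⟨hsize, e⟩ := ih x (by simp) y.2 hc.symm
      obtain ⟨hsize', e'⟩ := ihr (fun z hz => ih z (by simp [hz])) s hrs.symm
      refine ⟨by rw [size_congr_perm hp, size_cons, size_cons, hsize, hsize'], ?_⟩
      refine EqD.trans ?_ (eqD_toProc_of_perm hp.symm)
      simpa [ha] using EqD.congPar (.congPre y.1 e) e'

theorem size_eq_of_code_eq {t s : SyncTree A} (h : code t = code s) : size t = size s :=
  (size_eq_and_eqD_of_code_eq t s h).1

theorem eqD_toProc_of_code_eq {t s : SyncTree A} (h : code t = code s) :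
    EqD (toProc t) (toProc s) :=
  (size_eq_and_eqD_of_code_eq t s h).2

theorem key_not_mem_keys_children {x c : A × SyncTree A} (h : size x.2 ≤ size c.2) :
    key c ∉ keys x.2.children := by
  intro hc
  obtain ⟨y, hy, hyc⟩ := mem_keys.1 hc
  have := size_lt_of_mem hy
  rw [node_children, size_eq_of_code_eq (Prod.mk.inj hyc).2] at this
  omega

/-- `a.F` can be split by the distribution law: `F ≡ G | a.G | ... | a.G` with `n > 0` copies
of `a.G`, up to reordering. -/
def Expandable (a : A) (F : SyncTree A) : Prop :=
  ∃ G n, 0 < n ∧ keys F.children = keys G.children + Multiset.replicate n (key (a, G))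

inductive Normal : SyncTree A → Prop
  | mk {l : List (A × SyncTree A)} :
      (∀ x ∈ l, Normal x.2) → (∀ x ∈ l, ¬ Expandable x.1 x.2) → Normal (node l)

theorem normal_node_iff {l : List (A × SyncTree A)} :
    Normal (node l) ↔ ∀ x ∈ l, Normal x.2 ∧ ¬ Expandable x.1 x.2 :=
  ⟨fun ⟨h₁, h₂⟩ x hx => ⟨h₁ x hx, h₂ x hx⟩,
    fun h => .mk (fun x hx => (h x hx).1) (fun x hx => (h x hx).2)⟩

theorem Normal.residual {M r : List (A × SyncTree A)} {x : A × SyncTree A} (hM : Normal (node M))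
    (h : M.Perm (x :: r)) :
    Normal (node (x.2.children ++ r)) := by
  rw [normal_node_iff] at hM ⊢
  have hx := hM x (h.symm.subset (List.mem_cons_self ..))
  intro y hy
  rcases List.mem_append.1 hy with hy | hy
  · exact normal_node_iff.1 (node_children x.2 ▸ hx.1) y hy
  · exact hM y (h.symm.subset (List.mem_cons_of_mem _ hy))

theorem Expandable.exists_child {a : A} {F : SyncTree A} (h : Expandable a F) :
    ∃ x ∈ F.children, x.1 = a ∧ ∃ n, 0 < n ∧
      keys F.children = keys x.2.children + Multiset.replicate n (key x) := by
  obtain ⟨G, n, hn, hF⟩ := h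
  obtain ⟨x, hx, hxG⟩ : ∃ x ∈ F.children, key x = key (a, G) :=
    mem_keys.1 (hF ▸ Multiset.mem_add.2 (.inr (Multiset.mem_replicate.2 ⟨hn.ne', rfl⟩)))
  obtain ⟨ha, hc⟩ := Prod.mk.inj hxG
  exact ⟨x, hx, ha, n, hn, by rw [hF, hxG, code_eq_iff.1 hc]⟩

theorem exists_normal_eqD_pre (a : A) {F : SyncTree A} (hF : Normal F) :
    ∃ t, Normal t ∧ EqD (.pre a (toProc F)) (toProc t) := by
  by_cases hexp : Expandable a F
  · obtain ⟨x, hx, rfl, n, -, hkeys⟩ := hexp.exists_child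
    refine ⟨node (List.replicate (n + 1) x), normal_node_iff.2 fun y hy => ?_, ?_⟩
    · rw [List.eq_of_mem_replicate hy]
      exact normal_node_iff.1 (node_children F ▸ hF) x hx
    have hsplit : EqD (toProc F) (.par (toProc x.2) (Proc.reps n (.pre x.1 (toProc x.2)))) := by
      refine (eqD_toProc_of_code_eq (t := F) (s := node (x.2.children ++ List.replicate n x))
        (code_eq_iff.2 (by simpa using hkeys))).trans ?_
      simpa [toProc_replicate] using eqD_toProc_append x.2.children (List.replicate n x)
    rw [toProc_replicate]
    exact (EqD.congPre _ hsplit).trans (.distr _ _ n (isFin_toProc x.2))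
  · exact ⟨node [(a, F)], normal_node_iff.2 (by simpa using ⟨hF, hexp⟩),
      by simpa using (EqD.parNil _).symm⟩

theorem exists_normal_eqD {F : Proc A} (hF : F.IsFin) : ∃ t, Normal t ∧ EqD F (toProc t) := by
  induction F with
  | nil => exact ⟨node [], normal_node_iff.2 (by simp), by simpa using .refl _⟩
  | pre a p ih =>
    obtain ⟨t, ht, e⟩ := ih hF
    obtain ⟨t', ht', e'⟩ := exists_normal_eqD_pre a ht
    exact ⟨t', ht', (EqD.congPre a e).trans e'⟩
  | par p q ihp ihq =>
    obtain ⟨⟨l⟩, hl, ep⟩ := ihp hF.1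
    obtain ⟨⟨l'⟩, hl', eq⟩ := ihq hF.2
    refine ⟨node (l ++ l'), normal_node_iff.2 fun x hx => ?_,
      (EqD.congPar ep eq).trans (eqD_toProc_append l l').symm⟩
    rcases List.mem_append.1 hx with hx | hx
    · exact normal_node_iff.1 hl x hx
    · exact normal_node_iff.1 hl' x hx
  | repl => exact hF.elim

/-- A transition of `∏ M` fires a component `x` with `M.Perm (x :: r)` and leaves
`∏ (x.2.children ++ r)`; here every such residual is matched, up to reordering, by one of `∏ N`. -/
def ResidualsMatch (M N : List (A × SyncTree A)) : Prop :=
  ∀ x r, M.Perm (x :: r) → ∃ y s, N.Perm (y :: s) ∧ x.1 = y.1 ∧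
    keys (x.2.children ++ r) = keys (y.2.children ++ s)

section Counting

variable [DecidableEq A] {M N r : List (A × SyncTree A)} {x c : A × SyncTree A}

theorem count_key_eq_of_perm (h : M.Perm (x :: r)) (hx : size x.2 ≤ size c.2) :
    (keys M).count (key c) =
      (keys (x.2.children ++ r)).count (key c) + if key c = key x then 1 else 0 := by
  rw [keys_congr_perm h, keys_cons, keys_append, Multiset.count_cons, Multiset.count_add,
    Multiset.count_eq_zero.2 (key_not_mem_keys_children hx), zero_add]

theorem ResidualsMatch.exists_count_key (h : ResidualsMatch M N)
    (hmax : ∀ x ∈ M ++ N, size x.2 ≤ size c.2) (hx : x ∈ M) :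
    ∃ y ∈ N, (keys M).count (key c) + (if key c = key y then 1 else 0) =
      (keys N).count (key c) + if key c = key x then 1 else 0 := by
  classical
  have hr := List.perm_cons_erase hx
  obtain ⟨y, s, hs, -, hres⟩ := h x _ hr
  have hy := hs.symm.subset (List.mem_cons_self ..)
  refine ⟨y, hy, ?_⟩
  rw [count_key_eq_of_perm hr (hmax x (by simp [hx])),
    count_key_eq_of_perm hs (hmax y (by simp [hy])), hres]
  omega

/-- Every answer changes the number of copies of a maximal `c` by at most one, so a surplus of
one copy on the left can only survive if the left side is `c` alone. -/
theorem ResidualsMatch.keys_eq_singleton (hMN : ResidualsMatch M N) (hNM : ResidualsMatch N M)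
    (hmax : ∀ x ∈ M ++ N, size x.2 ≤ size c.2)
    (hcount : (keys M).count (key c) = (keys N).count (key c) + 1) : keys M = {key c} := by
  have hmax' : ∀ x ∈ N ++ M, size x.2 ≤ size c.2 :=
    fun x hx => hmax x (List.perm_append_comm.subset hx)
  have hN : ∀ e ∈ N, key c ≠ key e := by
    intro e he hce
    obtain ⟨f, -, h⟩ := hNM.exists_count_key hmax' he
    split_ifs at h <;> omega
  have hM : ∀ f ∈ M, key f = key c := by
    intro f hf
    by_contra hcf
    obtain ⟨g, hg, h⟩ := hMN.exists_count_key hmax hf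
    rw [if_neg (hN g hg), if_neg (Ne.symm hcf)] at h
    omega
  have hcN : (keys N).count (key c) = 0 :=
    Multiset.count_eq_zero.2 fun hk => (mem_keys.1 hk).elim fun e ⟨he, hec⟩ => hN e he hec.symm
  have hrep : keys M = Multiset.replicate (keys M).card (key c) :=
    Multiset.eq_replicate_card.2 fun k hk => (mem_keys.1 hk).elim fun f ⟨hf, hfk⟩ => hfk ▸ hM f hf
  rw [hrep, Multiset.count_replicate_self, hcN] at hcount
  rw [hrep, hcount]
  rfl

end Counting

theorem key_eq_of_keys_residual_eq {N r s : List (A × SyncTree A)} {x y : A × SyncTree A}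
    (hx : N.Perm (x :: r)) (hy : N.Perm (y :: s))
    (h : keys (x.2.children ++ r) = keys (y.2.children ++ s)) : key x = key y := by
  classical
  by_contra hxy
  have hN := congrArg (Multiset.count (key y))
    ((keys_congr_perm hx).symm.trans (keys_congr_perm hy))
  have hres := congrArg (Multiset.count (key y)) h
  simp only [keys_cons, keys_append, Multiset.count_cons, Multiset.count_add, ↓reduceIte,
    if_neg (Ne.symm hxy), Multiset.count_eq_zero.2 (key_not_mem_keys_children le_rfl)] at hN hres
  omega

theorem keys_residual_of_keys_eq_singleton {M r : List (A × SyncTree A)} {c x : A × SyncTree A}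
    (hM : keys M = {key c}) (hx : M.Perm (x :: r)) :
    keys (x.2.children ++ r) = keys c.2.children := by
  obtain ⟨hcx, hr⟩ := (Multiset.singleton_eq_cons_iff _).1
    (hM.symm.trans ((keys_congr_perm hx).trans (keys_cons x r)))
  rw [keys_append, hr, add_zero, code_eq_iff.1 (Prod.mk.inj hcx).2]

/-- Every component of `N` must leave the residual of `c`, which forces `∏ N = d | ⋯ | d`. -/
theorem expandable_of_keys_eq_singleton {M N s : List (A × SyncTree A)} {c d : A × SyncTree A}
    (hNM : ResidualsMatch N M) (hM : keys M = {key c}) (hs : N.Perm (d :: s)) (hcd : c.1 = d.1)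
    (hdc : key c ≠ key d) (hres : keys c.2.children = keys (d.2.children ++ s)) :
    Expandable c.1 c.2 := by
  classical
  have hsd : ∀ e ∈ s, key e = key d := by
    intro e he
    have he := List.perm_cons_erase (hs.symm.subset (List.mem_cons_of_mem _ he))
    obtain ⟨f, r, hf, -, hres'⟩ := hNM e _ he
    rw [keys_residual_of_keys_eq_singleton hM hf, hres] at hres'
    exact key_eq_of_keys_residual_eq he hs hres'
  obtain ⟨n, hn⟩ : ∃ n, keys s = Multiset.replicate n (key d) :=
    ⟨_, Multiset.eq_replicate_card.2 fun k hk =>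
      (mem_keys.1 hk).elim fun e ⟨he, hek⟩ => hek ▸ hsd e he⟩
  have hsplit : keys c.2.children = keys d.2.children + Multiset.replicate n (key (c.1, d.2)) := by
    rw [hcd, Prod.mk.eta, ← hn, hres, keys_append]
  refine ⟨d.2, n, Nat.pos_of_ne_zero fun hn0 => hdc ?_, hsplit⟩
  rw [hn0, Multiset.replicate_zero, add_zero] at hsplit
  exact Prod.ext hcd (code_eq_iff.2 hsplit)

theorem keys_eq_of_residualsMatch [DecidableEq A] {M N : List (A × SyncTree A)}
    {c : A × SyncTree A} (hexp : ∀ x ∈ M, ¬ Expandable x.1 x.2) (hMN : ResidualsMatch M N)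
    (hNM : ResidualsMatch N M) (hc : c ∈ M) (hmax : ∀ x ∈ M ++ N, size x.2 ≤ size c.2) :
    keys M = keys N := by
  classical
  have hr := List.perm_cons_erase hc
  obtain ⟨d, s, hs, hcd, hres⟩ := hMN c _ hr
  have hd := hs.symm.subset (List.mem_cons_self ..)
  by_cases hdc : key c = key d
  · rw [keys_congr_perm hr, keys_congr_perm hs, keys_cons, keys_cons, hdc]
    simpa [code_eq_iff.1 (Prod.mk.inj hdc).2] using hres
  have hcount : (keys M).count (key c) = (keys N).count (key c) + 1 := by
    rw [count_key_eq_of_perm hr (hmax c (by simp [hc])),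
      count_key_eq_of_perm hs (hmax d (by simp [hd])), hres]
    simp [hdc]
  have hM := hMN.keys_eq_singleton hNM hmax hcount
  rw [keys_residual_of_keys_eq_singleton hM hr] at hres
  exact (hexp c hc (expandable_of_keys_eq_singleton hNM hM hs hcd hdc hres)).elim

theorem residualsMatch_of_bisim {M N : List (A × SyncTree A)}
    (ih : ∀ M' N' : List (A × SyncTree A), size (node M') + size (node N') <
      size (node M) + size (node N) → Normal (node M') → Normal (node N') →
      Bisim (toProc (node M')) (toProc (node N')) → keys M' = keys N')
    (hM : Normal (node M)) (hN : Normal (node N))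
    (hB : Bisim (toProc (node M)) (toProc (node N))) : ResidualsMatch M N := by
  intro x r hx
  obtain ⟨y, s, hy, hxy, hres⟩ := exists_perm_cons_of_bisim hB hx
  refine ⟨y, s, hy, hxy, ih _ _ ?_ (hM.residual hx) (hN.residual hy) hres⟩
  have := size_residual_lt hx
  have := size_residual_lt hy
  omega

theorem keys_eq_of_bisim {M N : List (A × SyncTree A)} (hM : Normal (node M))
    (hN : Normal (node N)) (hB : Bisim (toProc (node M)) (toProc (node N))) :
    keys M = keys N := by
  classical
  induction hn : size (node M) + size (node N) using Nat.strong_induction_on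
    generalizing M N with
  | _ n ih => ?_
  have hMN := residualsMatch_of_bisim
    (fun _ _ h hM' hN' hB' => ih _ (hn ▸ h) hM' hN' hB' rfl) hM hN hB
  have hNM := residualsMatch_of_bisim
    (fun _ _ h hM' hN' hB' => ih _ (by omega) hM' hN' hB' rfl) hN hM hB.symm
  rcases hc : (M ++ N).argmax (fun x => size x.2) with _ | c
  · simp_all [List.argmax_eq_none]
  have hmax : ∀ x ∈ M ++ N, size x.2 ≤ size c.2 := fun x hx =>
    List.le_of_mem_argmax (f := fun x : A × SyncTree A => size x.2) hx hc
  rcases List.mem_append.1 (List.argmax_mem hc) with hcM | hcN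
  · exact keys_eq_of_residualsMatch (fun x hx => (normal_node_iff.1 hM x hx).2) hMN hNM hcM hmax
  · exact (keys_eq_of_residualsMatch (fun x hx => (normal_node_iff.1 hN x hx).2) hNM hMN hcN
      fun x hx => hmax x (List.perm_append_comm.subset hx)).symm

theorem eqD_of_bisim {t s : SyncTree A} (ht : Normal t) (hs : Normal s)
    (hB : Bisim (toProc t) (toProc s)) : EqD (toProc t) (toProc s) := by
  cases t; cases s
  exact eqD_toProc_of_code_eq (code_eq_iff.2 (keys_eq_of_bisim ht hs hB))

end SyncTree

end CCS

/-- On finite processes, `≡D` coincides with strong bisimilarity. -/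
theorem eqD_iff_bisim_of_finite {A : Type} [Countable A]
    (F F' : CCS.Proc A) (hF : F.IsFin) (hF' : F'.IsFin) :
    CCS.EqD F F' ↔ CCS.Bisim F F' := by
  refine ⟨CCS.EqD.bisim, fun hB => ?_⟩
  obtain ⟨t, ht, hFt⟩ := CCS.SyncTree.exists_normal_eqD hF
  obtain ⟨t', ht', hFt'⟩ := CCS.SyncTree.exists_normal_eqD hF'
  have hB' := hFt.bisim.symm.trans (hB.trans hFt'.bisim)
  exact hFt.trans ((CCS.SyncTree.eqD_of_bisim ht ht' hB').trans hFt'.symm)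
end

section
/- If C[0] ~ !α.F | P for some process P, then C[0] ~ C[α.F]. -/
namespace CCS

variable {A : Type}

/-! ### Basic facts about bisimilarity -/

theorem bisim_refl (p : Proc A) : Bisim p p :=
  ⟨Eq, ⟨fun _ _ h => h.symm, fun _ _ h a p' hs => ⟨p', h ▸ hs, rfl⟩⟩, rfl⟩

theorem bisim_symm {p q : Proc A} (h : Bisim p q) : Bisim q p := by
  obtain ⟨R, hR, hpq⟩ := h
  exact ⟨R, hR, hR.1 hpq⟩

theorem bisim_step {p q : Proc A} (h : Bisim p q) {a : A} {p' : Proc A}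
    (hs : Step p a p') : ∃ q', Step q a q' ∧ Bisim p' q' := by
  obtain ⟨R, hR, hpq⟩ := h
  obtain ⟨q', hq, hr⟩ := hR.2 p q hpq a p' hs
  exact ⟨q', hq, R, hR, hr⟩

theorem bisim_trans {p q r : Proc A} (h1 : Bisim p q) (h2 : Bisim q r) :
    Bisim p r := by
  refine ⟨fun x z => ∃ y, Bisim x y ∧ Bisim y z, ⟨?_, ?_⟩, q, h1, h2⟩
  · rintro x z ⟨y, hxy, hyz⟩
    exact ⟨y, bisim_symm hyz, bisim_symm hxy⟩
  · rintro x z ⟨y, hxy, hyz⟩ a x' hs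
    obtain ⟨y', hsy, hxy'⟩ := bisim_step hxy hs
    obtain ⟨z', hsz, hyz'⟩ := bisim_step hyz hsy
    exact ⟨z', hsz, y', hxy', hyz'⟩

/-- Structural congruence moves needed below. -/
inductive SC : Proc A → Proc A → Prop where
  | refl (p : Proc A) : SC p p
  | comm (p q : Proc A) : SC (Proc.par p q) (Proc.par q p)
  | assoc1 (p q r : Proc A) :
      SC (Proc.par (Proc.par p q) r) (Proc.par p (Proc.par q r))
  | assoc2 (p q r : Proc A) :
      SC (Proc.par p (Proc.par q r)) (Proc.par (Proc.par p q) r)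
  | nil1 (p : Proc A) : SC (Proc.par Proc.nil p) p
  | nil2 (p : Proc A) : SC p (Proc.par Proc.nil p)
  | parCong {p p' q q' : Proc A} :
      SC p p' → SC q q' → SC (Proc.par p q) (Proc.par p' q')

theorem sc_symm : ∀ {p q : Proc A}, SC p q → SC q p := by
  intro p q h
  induction h with
  | refl p => exact SC.refl p
  | comm p q => exact SC.comm q p
  | assoc1 p q r => exact SC.assoc2 p q r
  | assoc2 p q r => exact SC.assoc1 p q r
  | nil1 p => exact SC.nil2 p
  | nil2 p => exact SC.nil1 p
  | parCong _ _ ih1 ih2 => exact SC.parCong ih1 ih2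

theorem sc_step : ∀ {p q : Proc A}, SC p q → ∀ (a : A) (p' : Proc A),
    Step p a p' → ∃ q', Step q a q' ∧ SC p' q' := by
  intro p q h
  induction h with
  | refl p => exact fun a p' hs => ⟨p', hs, SC.refl _⟩
  | comm p q =>
    intro a x hs
    cases hs with
    | parL q hp => exact ⟨_, Step.parR _ hp, SC.comm _ _⟩
    | parR p hq => exact ⟨_, Step.parL _ hq, SC.comm _ _⟩
  | assoc1 p q r =>
    intro a x hs
    cases hs with
    | parL _ hpq =>
      cases hpq with
      | parL _ hp => exact ⟨_, Step.parL _ hp, SC.assoc1 _ _ _⟩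
      | parR _ hq => exact ⟨_, Step.parR _ (Step.parL _ hq), SC.assoc1 _ _ _⟩
    | parR _ hr => exact ⟨_, Step.parR _ (Step.parR _ hr), SC.assoc1 _ _ _⟩
  | assoc2 p q r =>
    intro a x hs
    cases hs with
    | parL _ hp => exact ⟨_, Step.parL _ (Step.parL _ hp), SC.assoc2 _ _ _⟩
    | parR _ hqr =>
      cases hqr with
      | parL _ hq => exact ⟨_, Step.parL _ (Step.parR _ hq), SC.assoc2 _ _ _⟩
      | parR _ hr => exact ⟨_, Step.parR _ hr, SC.assoc2 _ _ _⟩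
  | nil1 p =>
    intro a x hs
    cases hs with
    | parL _ hn => cases hn
    | parR _ hp => exact ⟨_, hp, SC.nil1 _⟩
  | nil2 p =>
    intro a x hs
    exact ⟨_, Step.parR _ hs, SC.nil2 _⟩
  | parCong h1 h2 ih1 ih2 =>
    intro a x hs
    cases hs with
    | parL _ hp =>
      obtain ⟨y, hy, hsc⟩ := ih1 _ _ hp
      exact ⟨_, Step.parL _ hy, SC.parCong hsc h2⟩
    | parR _ hq =>
      obtain ⟨y, hy, hsc⟩ := ih2 _ _ hq
      exact ⟨_, Step.parR _ hy, SC.parCong h1 hsc⟩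

theorem bisim_of_sc {p q : Proc A} (h : SC p q) : Bisim p q :=
  ⟨SC, ⟨fun _ _ => sc_symm, fun _ _ h' => sc_step h'⟩, h⟩

theorem bisim_par_cong {p p' q q' : Proc A}
    (h1 : Bisim p p') (h2 : Bisim q q') :
    Bisim (Proc.par p q) (Proc.par p' q') := by
  refine ⟨fun x y => ∃ u u' v v', x = Proc.par u v ∧ y = Proc.par u' v' ∧
      Bisim u u' ∧ Bisim v v', ⟨?_, ?_⟩, p, p', q, q', rfl, rfl, h1, h2⟩
  · rintro x y ⟨u, u', v, v', rfl, rfl, hu, hv⟩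
    exact ⟨u', u, v', v, rfl, rfl, bisim_symm hu, bisim_symm hv⟩
  · rintro x y ⟨u, u', v, v', rfl, rfl, hu, hv⟩ a x' hs
    cases hs with
    | parL _ hp =>
      obtain ⟨w, hw, hb⟩ := bisim_step hu hp
      exact ⟨_, Step.parL _ hw, _, _, _, _, rfl, rfl, hb, hv⟩
    | parR _ hq =>
      obtain ⟨w, hw, hb⟩ := bisim_step hv hq
      exact ⟨_, Step.parR _ hw, _, _, _, _, rfl, rfl, hu, hb⟩

/-- `(x | f) | y ~ (x | y) | f`. -/
theorem bisim_swap (x f y : Proc A) :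
    Bisim (Proc.par (Proc.par x f) y) (Proc.par (Proc.par x y) f) :=
  bisim_trans (bisim_of_sc (SC.assoc1 x f y))
    (bisim_trans (bisim_par_cong (bisim_refl x) (bisim_of_sc (SC.comm f y)))
      (bisim_of_sc (SC.assoc2 x y f)))

/-! ### The `Diff` relation: replacing some `nil`s by `a.F` -/

inductive Diff (a : A) (F : Proc A) : Proc A → Proc A → Prop where
  | refl (p : Proc A) : Diff a F p p
  | hole : Diff a F Proc.nil (Proc.pre a F)
  | pre (b : A) {p q : Proc A} : Diff a F p q →
      Diff a F (Proc.pre b p) (Proc.pre b q)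
  | par {p p' q q' : Proc A} : Diff a F p p' → Diff a F q q' →
      Diff a F (Proc.par p q) (Proc.par p' q')
  | repl (b : A) {p q : Proc A} : Diff a F p q →
      Diff a F (Proc.repl b p) (Proc.repl b q)

theorem diff_fill_fin (a : A) (F : Proc A) (D : FCtx A) :
    Diff a F (D.fill Proc.nil) (D.fill (Proc.pre a F)) := by
  induction D with
  | hole => exact Diff.hole
  | pre b d ih => exact Diff.pre b ih
  | par d f ih => exact Diff.par ih (Diff.refl f)

theorem diff_fill (a : A) (F : Proc A) (C : Ctx A) :
    Diff a F (C.fill Proc.nil) (C.fill (Proc.pre a F)) := by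
  cases C with
  | ofD d => exact diff_fill_fin a F d
  | repl b d => exact Diff.repl b (diff_fill_fin a F d)
  | par c p => exact Diff.par (diff_fill a F c) (Diff.refl p)

theorem diff_fwd {a : A} {F : Proc A} :
    ∀ {x y : Proc A}, Diff a F x y → ∀ {α : A} {x' : Proc A}, Step x α x' →
      ∃ y', Step y α y' ∧ Diff a F x' y' := by
  intro x y h
  induction h with
  | refl p => exact fun hs => ⟨_, hs, Diff.refl _⟩
  | hole => intro α x' hs; cases hs
  | pre b hd ih =>
    intro α x' hs
    cases hs with
    | pre => exact ⟨_, Step.pre, hd⟩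
  | par hd1 hd2 ih1 ih2 =>
    intro α x' hs
    cases hs with
    | parL _ hp =>
      obtain ⟨y', hy, hd⟩ := ih1 hp
      exact ⟨_, Step.parL _ hy, Diff.par hd hd2⟩
    | parR _ hq =>
      obtain ⟨y', hy, hd⟩ := ih2 hq
      exact ⟨_, Step.parR _ hy, Diff.par hd1 hd⟩
  | repl b hd ih =>
    intro α x' hs
    cases hs with
    | repl => exact ⟨_, Step.repl, Diff.par (Diff.repl b hd) hd⟩

theorem diff_bwd {a : A} {F : Proc A} :
    ∀ {x y : Proc A}, Diff a F x y → ∀ {α : A} {y' : Proc A}, Step y α y' →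
      (∃ x', Step x α x' ∧ Diff a F x' y') ∨
      (α = a ∧ ∃ y₀, Diff a F x y₀ ∧ Bisim y' (Proc.par y₀ F)) := by
  intro x y h
  induction h with
  | refl p => exact fun hs => Or.inl ⟨_, hs, Diff.refl _⟩
  | hole =>
    intro α y' hs
    cases hs with
    | pre =>
      exact Or.inr ⟨rfl, Proc.nil, Diff.refl _, bisim_of_sc (SC.nil2 F)⟩
  | pre b hd ih =>
    intro α y' hs
    cases hs with
    | pre => exact Or.inl ⟨_, Step.pre, hd⟩
  | par hd1 hd2 ih1 ih2 =>
    intro α y' hs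
    cases hs with
    | parL _ hp =>
      rcases ih1 hp with ⟨x1, hsx, hd⟩ | ⟨rfl, y₀, hd₀, hb⟩
      · exact Or.inl ⟨_, Step.parL _ hsx, Diff.par hd hd2⟩
      · refine Or.inr ⟨rfl, Proc.par y₀ _, Diff.par hd₀ hd2, ?_⟩
        exact bisim_trans (bisim_par_cong hb (bisim_refl _)) (bisim_swap y₀ F _)
    | parR _ hq =>
      rcases ih2 hq with ⟨x2, hsx, hd⟩ | ⟨rfl, y₀, hd₀, hb⟩
      · exact Or.inl ⟨_, Step.parR _ hsx, Diff.par hd1 hd⟩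
      · refine Or.inr ⟨rfl, Proc.par _ y₀, Diff.par hd1 hd₀, ?_⟩
        exact bisim_trans (bisim_par_cong (bisim_refl _) hb)
          (bisim_of_sc (SC.assoc2 _ y₀ F))
  | repl b hd ih =>
    intro α y' hs
    cases hs with
    | repl => exact Or.inl ⟨_, Step.repl, Diff.par (Diff.repl b hd) hd⟩

/-! ### Persistence of the replication -/

/-- `X` is bisimilar to something of the form `!a.F | Q`. -/
def Pers (a : A) (F X : Proc A) : Prop :=
  ∃ Q, Bisim X (Proc.par (Proc.repl a F) Q)

theorem pers_step {a : A} {F X : Proc A} (h : Pers a F X)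
    {α : A} {X' : Proc A} (hs : Step X α X') : Pers a F X' := by
  obtain ⟨Q, hB⟩ := h
  obtain ⟨W, hsW, hBW⟩ := bisim_step hB hs
  cases hsW with
  | parL _ h1 =>
    cases h1 with
    | repl =>
      exact ⟨Proc.par F Q, bisim_trans hBW (bisim_of_sc (SC.assoc1 _ F Q))⟩
  | parR _ h2 => exact ⟨_, hBW⟩

theorem pers_a_step {a : A} {F X : Proc A} (h : Pers a F X) :
    ∃ X', Step X a X' ∧ Bisim X' (Proc.par X F) := by
  obtain ⟨Q, hB⟩ := h
  have hstep : Step (Proc.par (Proc.repl a F) Q) a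
      (Proc.par (Proc.par (Proc.repl a F) F) Q) := Step.parL Q Step.repl
  obtain ⟨X', hsX, hBX⟩ := bisim_step (bisim_symm hB) hstep
  refine ⟨X', hsX, bisim_trans (bisim_symm hBX) ?_⟩
  exact bisim_trans (bisim_swap (Proc.repl a F) F Q)
    (bisim_par_cong (bisim_symm hB) (bisim_refl F))

theorem pers_par {a : A} {F X : Proc A} (h : Pers a F X) (G : Proc A) :
    Pers a F (Proc.par X G) := by
  obtain ⟨Q, hB⟩ := h
  exact ⟨Proc.par Q G, bisim_trans (bisim_par_cong hB (bisim_refl G))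
    (bisim_of_sc (SC.assoc1 _ Q G))⟩

/-! ### The main bisimulation candidate -/

def MR (a : A) (F : Proc A) (U V : Proc A) : Prop :=
  ∃ X Y, Pers a F X ∧ Diff a F X Y ∧ Bisim U X ∧ Bisim V Y

theorem mr_left {a : A} {F U V : Proc A} (h : MR a F U V)
    {α : A} {U' : Proc A} (hs : Step U α U') :
    ∃ V', Step V α V' ∧ MR a F U' V' := by
  obtain ⟨X, Y, hP, hD, hUX, hVY⟩ := h
  obtain ⟨X', hsX, hUX'⟩ := bisim_step hUX hs
  obtain ⟨Y', hsY, hD'⟩ := diff_fwd hD hsX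
  obtain ⟨V', hsV, hYV'⟩ := bisim_step (bisim_symm hVY) hsY
  exact ⟨V', hsV, X', Y', pers_step hP hsX, hD', hUX', bisim_symm hYV'⟩

theorem mr_right {a : A} {F U V : Proc A} (h : MR a F U V)
    {α : A} {V' : Proc A} (hs : Step V α V') :
    ∃ U', Step U α U' ∧ MR a F U' V' := by
  obtain ⟨X, Y, hP, hD, hUX, hVY⟩ := h
  obtain ⟨Y', hsY, hVY'⟩ := bisim_step hVY hs
  rcases diff_bwd hD hsY with ⟨X', hsX, hD'⟩ | ⟨rfl, Y₀, hD₀, hBY⟩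
  · obtain ⟨U', hsU, hXU'⟩ := bisim_step (bisim_symm hUX) hsX
    exact ⟨U', hsU, X', Y', pers_step hP hsX, hD', bisim_symm hXU', hVY'⟩
  · obtain ⟨X', hsX, hBX'⟩ := pers_a_step hP
    obtain ⟨U', hsU, hXU'⟩ := bisim_step (bisim_symm hUX) hsX
    refine ⟨U', hsU, Proc.par X F, Proc.par Y₀ F, pers_par hP F,
      Diff.par hD₀ (Diff.refl F), ?_, ?_⟩
    · exact bisim_trans (bisim_symm hXU') hBX'
    · exact bisim_trans hVY' hBY

theorem bisim_of_mr {a : A} {F U V : Proc A} (h : MR a F U V) : Bisim U V := by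
  refine ⟨fun x y => MR a F x y ∨ MR a F y x, ⟨?_, ?_⟩, Or.inl h⟩
  · rintro x y (hm | hm)
    · exact Or.inr hm
    · exact Or.inl hm
  · rintro x y (hm | hm) α x' hs
    · obtain ⟨y', hsy, hm'⟩ := mr_left hm hs
      exact ⟨y', hsy, Or.inl hm'⟩
    · obtain ⟨y', hsy, hm'⟩ := mr_right hm hs
      exact ⟨y', hsy, Or.inr hm'⟩

end CCS

/-- If `C[0] ~ !α.F | P`, then `C[0] ~ C[α.F]`. -/
theorem bisim_fill_of_bisim_repl {A : Type} [Countable A]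
    (C : CCS.Ctx A) (a : A) (F P : CCS.Proc A)
    (hC : C.Wf) (hF : F.IsFin) (hP : P.Wf)
    (h : CCS.Bisim (C.fill CCS.Proc.nil)
          (CCS.Proc.par (CCS.Proc.repl a F) P)) :
    CCS.Bisim (C.fill CCS.Proc.nil) (C.fill (CCS.Proc.pre a F)) := by
  exact CCS.bisim_of_mr ⟨C.fill CCS.Proc.nil, C.fill (CCS.Proc.pre a F),
    ⟨P, h⟩, CCS.diff_fill a F C, CCS.bisim_refl _, CCS.bisim_refl _⟩
end

section
/- For every context C, action α, and finite process F: !α.F | C[α.F] ~ !α.F | C[0] (law (A)), and for every finite context D: !α.D[α.D[0]] ~ !α.D[0] (law (A')). -/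
namespace CCS

/-! ### Auxiliary development for laws (A) and (A') -/

section Aux

variable {A : Type}

/-- Structural congruence (parallel: commutative monoid laws). -/
inductive SC_s2 : Proc A → Proc A → Prop where
  | refl (p : Proc A) : SC_s2 p p
  | symm {p q : Proc A} : SC_s2 p q → SC_s2 q p
  | trans {p q r : Proc A} : SC_s2 p q → SC_s2 q r → SC_s2 p r
  | comm (p q : Proc A) : SC_s2 (Proc.par p q) (Proc.par q p)
  | assoc (p q r : Proc A) :
      SC_s2 (Proc.par (Proc.par p q) r) (Proc.par p (Proc.par q r))
  | nilR (p : Proc A) : SC_s2 (Proc.par p Proc.nil) p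
  | congPar {p p' q q' : Proc A} :
      SC_s2 p p' → SC_s2 q q' → SC_s2 (Proc.par p q) (Proc.par p' q')

theorem SC_s2.congL {p p' : Proc A} (h : SC_s2 p p') (q : Proc A) :
    SC_s2 (Proc.par p q) (Proc.par p' q) := SC_s2.congPar h (SC_s2.refl q)

theorem SC_s2.congR {q q' : Proc A} (p : Proc A) (h : SC_s2 q q') :
    SC_s2 (Proc.par p q) (Proc.par p q') := SC_s2.congPar (SC_s2.refl p) h

theorem SC_s2.shuffle (p r q : Proc A) :
    SC_s2 (Proc.par p (Proc.par r q)) (Proc.par r (Proc.par p q)) :=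
  SC_s2.trans (SC_s2.symm (SC_s2.assoc p r q))
    (SC_s2.trans (SC_s2.congL (SC_s2.comm p r) q) (SC_s2.assoc r p q))

/-- Structural congruence respects transitions, in both directions. -/
theorem SC_s2.stepAux {p q : Proc A} (h : SC_s2 p q) :
    (∀ a p', Step p a p' → ∃ q', Step q a q' ∧ SC_s2 p' q') ∧
    (∀ a q', Step q a q' → ∃ p', Step p a p' ∧ SC_s2 p' q') := by
  induction h with
  | refl p => exact ⟨fun a p' hs => ⟨p', hs, SC_s2.refl p'⟩,
      fun a q' hs => ⟨q', hs, SC_s2.refl q'⟩⟩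
  | symm h ih =>
      exact ⟨fun a p' hs => by
        obtain ⟨q', hq, hsc⟩ := ih.2 a p' hs
        exact ⟨q', hq, hsc.symm⟩,
        fun a q' hs => by
        obtain ⟨p', hp, hsc⟩ := ih.1 a q' hs
        exact ⟨p', hp, hsc.symm⟩⟩
  | trans h1 h2 ih1 ih2 =>
      refine ⟨fun a p' hs => ?_, fun a r' hs => ?_⟩
      · obtain ⟨q', hq, hsc⟩ := ih1.1 a p' hs
        obtain ⟨r', hr, hsc'⟩ := ih2.1 a q' hq
        exact ⟨r', hr, hsc.trans hsc'⟩
      · obtain ⟨q', hq, hsc⟩ := ih2.2 a r' hs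
        obtain ⟨p', hp, hsc'⟩ := ih1.2 a q' hq
        exact ⟨p', hp, hsc'.trans hsc⟩
  | comm p q =>
      refine ⟨fun a r hs => ?_, fun a r hs => ?_⟩ <;>
        · cases hs with
          | parL _ h => exact ⟨_, Step.parR _ h, SC_s2.comm _ _⟩
          | parR _ h => exact ⟨_, Step.parL _ h, SC_s2.comm _ _⟩
  | assoc p q r =>
      refine ⟨fun a x hs => ?_, fun a x hs => ?_⟩
      · cases hs with
        | parL _ h =>
            cases h with
            | parL _ h => exact ⟨_, Step.parL _ h, SC_s2.assoc _ _ _⟩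
            | parR _ h => exact ⟨_, Step.parR _ (Step.parL _ h), SC_s2.assoc _ _ _⟩
        | parR _ h => exact ⟨_, Step.parR _ (Step.parR _ h), SC_s2.assoc _ _ _⟩
      · cases hs with
        | parL _ h => exact ⟨_, Step.parL _ (Step.parL _ h), SC_s2.assoc _ _ _⟩
        | parR _ h =>
            cases h with
            | parL _ h => exact ⟨_, Step.parL _ (Step.parR _ h), SC_s2.assoc _ _ _⟩
            | parR _ h => exact ⟨_, Step.parR _ h, SC_s2.assoc _ _ _⟩
  | nilR p =>
      refine ⟨fun a x hs => ?_, fun a x hs => ?_⟩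
      · cases hs with
        | parL _ h => exact ⟨_, h, SC_s2.nilR _⟩
        | parR _ h => cases h
      · exact ⟨_, Step.parL _ hs, SC_s2.nilR _⟩
  | congPar h1 h2 ih1 ih2 =>
      refine ⟨fun a x hs => ?_, fun a x hs => ?_⟩
      · cases hs with
        | parL _ h =>
            obtain ⟨y, hy, hsc⟩ := ih1.1 a _ h
            exact ⟨_, Step.parL _ hy, SC_s2.congPar hsc h2⟩
        | parR _ h =>
            obtain ⟨y, hy, hsc⟩ := ih2.1 a _ h
            exact ⟨_, Step.parR _ hy, SC_s2.congPar h1 hsc⟩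
      · cases hs with
        | parL _ h =>
            obtain ⟨y, hy, hsc⟩ := ih1.2 a _ h
            exact ⟨_, Step.parL _ hy, SC_s2.congPar hsc h2⟩
        | parR _ h =>
            obtain ⟨y, hy, hsc⟩ := ih2.2 a _ h
            exact ⟨_, Step.parR _ hy, SC_s2.congPar h1 hsc⟩

/-- The syntactic relation underlying the bisimulation: occurrences of
`a.Gr` on the left may be replaced by `0` on the right, and occurrences of
`!a.Gl` on the left by `!a.Gr` on the right. -/
inductive Rel (a : A) (Gl Gr : Proc A) : Proc A → Proc A → Prop where
  | refl (p : Proc A) : Rel a Gl Gr p p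
  | drop : Rel a Gl Gr (Proc.pre a Gr) Proc.nil
  | bang : Rel a Gl Gr (Proc.repl a Gl) (Proc.repl a Gr)
  | congPre (b : A) {p q : Proc A} :
      Rel a Gl Gr p q → Rel a Gl Gr (Proc.pre b p) (Proc.pre b q)
  | congPar {p p' q q' : Proc A} :
      Rel a Gl Gr p p' → Rel a Gl Gr q q' →
      Rel a Gl Gr (Proc.par p q) (Proc.par p' q')
  | congRepl (b : A) {p q : Proc A} :
      Rel a Gl Gr p q → Rel a Gl Gr (Proc.repl b p) (Proc.repl b q)

theorem Rel.fwd {a : A} {Gl Gr : Proc A} (hG : Rel a Gl Gr Gl Gr)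
    {P Q : Proc A} (h : Rel a Gl Gr P Q) {α : A} {P' : Proc A}
    (hs : Step P α P') :
    (∃ Q', Step Q α Q' ∧ Rel a Gl Gr P' Q') ∨
    (α = a ∧ ∃ Q'', Rel a Gl Gr P' Q'' ∧ SC_s2 Q'' (Proc.par Gr Q)) := by
  induction h generalizing α P' with
  | refl p => exact Or.inl ⟨P', hs, Rel.refl P'⟩
  | drop =>
      cases hs
      exact Or.inr ⟨rfl, Gr, Rel.refl Gr, SC_s2.symm (SC_s2.nilR Gr)⟩
  | bang =>
      cases hs
      exact Or.inl ⟨_, Step.repl, Rel.congPar Rel.bang hG⟩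
  | congPre b h =>
      cases hs
      exact Or.inl ⟨_, Step.pre, h⟩
  | congPar h1 h2 ih1 ih2 =>
      cases hs with
      | parL _ h =>
          rcases ih1 h with ⟨Q', hQ, hrel⟩ | ⟨rfl, Q'', hrel, hsc⟩
          · exact Or.inl ⟨_, Step.parL _ hQ, Rel.congPar hrel h2⟩
          · exact Or.inr ⟨rfl, _, Rel.congPar hrel h2,
              SC_s2.trans (SC_s2.congL hsc _) (SC_s2.assoc _ _ _)⟩
      | parR _ h =>
          rcases ih2 h with ⟨Q', hQ, hrel⟩ | ⟨rfl, Q'', hrel, hsc⟩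
          · exact Or.inl ⟨_, Step.parR _ hQ, Rel.congPar h1 hrel⟩
          · exact Or.inr ⟨rfl, _, Rel.congPar h1 hrel,
              SC_s2.trans (SC_s2.congR _ hsc) (SC_s2.shuffle _ _ _)⟩
  | congRepl b h =>
      cases hs
      exact Or.inl ⟨_, Step.repl, Rel.congPar (Rel.congRepl b h) h⟩

theorem Rel.bwd {a : A} {Gl Gr : Proc A} (hG : Rel a Gl Gr Gl Gr)
    {P Q : Proc A} (h : Rel a Gl Gr P Q) {α : A} {Q' : Proc A}
    (hs : Step Q α Q') :
    ∃ P', Step P α P' ∧ Rel a Gl Gr P' Q' := by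
  induction h generalizing α Q' with
  | refl p => exact ⟨Q', hs, Rel.refl Q'⟩
  | drop => cases hs
  | bang =>
      cases hs
      exact ⟨_, Step.repl, Rel.congPar Rel.bang hG⟩
  | congPre b h =>
      cases hs
      exact ⟨_, Step.pre, h⟩
  | congPar h1 h2 ih1 ih2 =>
      cases hs with
      | parL _ h =>
          obtain ⟨P', hP, hrel⟩ := ih1 h
          exact ⟨_, Step.parL _ hP, Rel.congPar hrel h2⟩
      | parR _ h =>
          obtain ⟨P', hP, hrel⟩ := ih2 h
          exact ⟨_, Step.parR _ hP, Rel.congPar h1 hrel⟩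
  | congRepl b h =>
      cases hs
      exact ⟨_, Step.repl, Rel.congPar (Rel.congRepl b h) h⟩

/-- Top-level form of the bisimulation (one orientation). -/
def TopR (a : A) (Gl Gr : Proc A) (X Y : Proc A) : Prop :=
  ∃ P Q, Rel a Gl Gr P Q ∧ SC_s2 X (Proc.par (Proc.repl a Gl) P) ∧
    SC_s2 Y (Proc.par (Proc.repl a Gr) Q)

theorem topR_fwd {a : A} {Gl Gr : Proc A} (hG : Rel a Gl Gr Gl Gr)
    {X Y : Proc A} (h : TopR a Gl Gr X Y) {α : A} {X' : Proc A}
    (hs : Step X α X') :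
    ∃ Y', Step Y α Y' ∧ TopR a Gl Gr X' Y' := by
  obtain ⟨P, Q, hrel, hX, hY⟩ := h
  obtain ⟨Z, hZ, hscZ⟩ := (SC_s2.stepAux hX).1 α X' hs
  cases hZ with
  | parL _ h =>
      cases h
      -- the guard `!a.Gl` fired
      obtain ⟨Y', hY', hscY⟩ :=
        (SC_s2.stepAux hY).2 a _ (Step.parL _ (Step.repl (a := a) (p := Gr)))
      refine ⟨Y', hY', Proc.par Gl P, Proc.par Gr Q,
        Rel.congPar hG hrel, ?_, ?_⟩
      · exact SC_s2.trans hscZ (SC_s2.assoc _ _ _)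
      · exact SC_s2.trans hscY (SC_s2.assoc _ _ _)
  | parR _ h =>
      rcases Rel.fwd hG hrel h with ⟨Q', hQ, hrel'⟩ | ⟨hα, Q'', hrel', hsc⟩
      · obtain ⟨Y', hY', hscY⟩ := (SC_s2.stepAux hY).2 α _ (Step.parR _ hQ)
        exact ⟨Y', hY', _, _, hrel', hscZ, hscY⟩
      · subst hα
        obtain ⟨Y', hY', hscY⟩ :=
          (SC_s2.stepAux hY).2 α _ (Step.parL _ (Step.repl (a := α) (p := Gr)))
        refine ⟨Y', hY', _, Q'', hrel', hscZ, ?_⟩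
        exact SC_s2.trans hscY (SC_s2.trans (SC_s2.assoc _ _ _)
          (SC_s2.congR _ (SC_s2.symm hsc)))

theorem topR_bwd {a : A} {Gl Gr : Proc A} (hG : Rel a Gl Gr Gl Gr)
    {X Y : Proc A} (h : TopR a Gl Gr X Y) {α : A} {Y' : Proc A}
    (hs : Step Y α Y') :
    ∃ X', Step X α X' ∧ TopR a Gl Gr X' Y' := by
  obtain ⟨P, Q, hrel, hX, hY⟩ := h
  obtain ⟨Z, hZ, hscZ⟩ := (SC_s2.stepAux hY).1 α Y' hs
  cases hZ with
  | parL _ h =>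
      cases h
      -- the guard `!a.Gr` fired
      obtain ⟨X', hX', hscX⟩ :=
        (SC_s2.stepAux hX).2 a _ (Step.parL _ (Step.repl (a := a) (p := Gl)))
      refine ⟨X', hX', Proc.par Gl P, Proc.par Gr Q,
        Rel.congPar hG hrel, ?_, ?_⟩
      · exact SC_s2.trans hscX (SC_s2.assoc _ _ _)
      · exact SC_s2.trans hscZ (SC_s2.assoc _ _ _)
  | parR _ h =>
      obtain ⟨P', hP, hrel'⟩ := Rel.bwd hG hrel h
      obtain ⟨X', hX', hscX⟩ := (SC_s2.stepAux hX).2 α _ (Step.parR _ hP)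
      exact ⟨X', hX', _, _, hrel', hscX, hscZ⟩

theorem topR_bisim {a : A} {Gl Gr : Proc A} (hG : Rel a Gl Gr Gl Gr) :
    IsBisim (fun X Y => TopR a Gl Gr X Y ∨ TopR a Gl Gr Y X) := by
  constructor
  · intro X Y h
    exact h.symm
  · rintro p q (h | h) α p' hs
    · obtain ⟨q', hq, h'⟩ := topR_fwd hG h hs
      exact ⟨q', hq, Or.inl h'⟩
    · obtain ⟨q', hq, h'⟩ := topR_bwd hG h hs
      exact ⟨q', hq, Or.inr h'⟩

theorem topR_bisimilar {a : A} {Gl Gr : Proc A} (hG : Rel a Gl Gr Gl Gr)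
    {X Y : Proc A} (h : TopR a Gl Gr X Y) : Bisim X Y :=
  ⟨_, topR_bisim hG, Or.inl h⟩

theorem rel_fillD (a : A) (Gl Gr : Proc A) (D : FCtx A) :
    Rel a Gl Gr (D.fill (Proc.pre a Gr)) (D.fill Proc.nil) := by
  induction D with
  | hole => exact Rel.drop
  | pre b d ih => exact Rel.congPre b ih
  | par d f ih => exact Rel.congPar ih (Rel.refl f)

theorem rel_fillC (a : A) (Gl Gr : Proc A) (C : Ctx A) :
    Rel a Gl Gr (C.fill (Proc.pre a Gr)) (C.fill Proc.nil) := by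
  induction C with
  | ofD d => exact rel_fillD a Gl Gr d
  | repl b d => exact Rel.congRepl b (rel_fillD a Gl Gr d)
  | par c q ih => exact Rel.congPar ih (Rel.refl q)

end Aux

end CCS

/-- Law (A): `!α.F | C[α.F] ~ !α.F | C[0]`, and
law (A'): `!α.D[α.D[0]] ~ !α.D[0]`. -/
theorem law_A_and_law_A' {A : Type} [Countable A] :
    (∀ (C : CCS.Ctx A) (a : A) (F : CCS.Proc A), C.Wf → F.IsFin →
      CCS.Bisim (CCS.Proc.par (CCS.Proc.repl a F) (C.fill (CCS.Proc.pre a F)))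
                (CCS.Proc.par (CCS.Proc.repl a F) (C.fill CCS.Proc.nil))) ∧
    (∀ (D : CCS.FCtx A) (a : A), D.Wf →
      CCS.Bisim (CCS.Proc.repl a (D.fill (CCS.Proc.pre a (D.fill CCS.Proc.nil))))
                (CCS.Proc.repl a (D.fill CCS.Proc.nil))) := by
  constructor
  · intro C a F _ _
    exact CCS.topR_bisimilar (Gl := F) (Gr := F) (CCS.Rel.refl F)
      ⟨C.fill (CCS.Proc.pre a F), C.fill CCS.Proc.nil,
        CCS.rel_fillC a F F C, CCS.SC_s2.refl _, CCS.SC_s2.refl _⟩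
  · intro D a _
    refine CCS.topR_bisimilar
      (Gl := D.fill (CCS.Proc.pre a (D.fill CCS.Proc.nil)))
      (Gr := D.fill CCS.Proc.nil)
      (CCS.rel_fillD a _ _ D)
      ⟨CCS.Proc.nil, CCS.Proc.nil, CCS.Rel.refl _, ?_, ?_⟩ <;>
      exact CCS.SC_s2.symm (CCS.SC_s2.nilR _)
end

section
/- (i) If S | F is a seed, then S ⫫ F. (ii) If S ▷ R, then S ⫫ R. -/
namespace CCS
namespace Aux

open Proc

variable {A : Type}

/-! ### Basic facts about `Step`, `size`, `IsFin` -/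

lemma step_nil_elim {e : A} {Z : Proc A} (h : Step Proc.nil e Z) : False := by cases h

lemma step_pre_inv {a e : A} {p Z : Proc A} (h : Step (Proc.pre a p) e Z) :
    e = a ∧ Z = p := by cases h; exact ⟨rfl, rfl⟩

lemma step_repl_inv {a e : A} {p Z : Proc A} (h : Step (Proc.repl a p) e Z) :
    e = a ∧ Z = Proc.par (Proc.repl a p) p := by cases h; exact ⟨rfl, rfl⟩

lemma step_par_inv {p q : Proc A} {e : A} {Z : Proc A} (h : Step (Proc.par p q) e Z) :
    (∃ p', Step p e p' ∧ Z = Proc.par p' q) ∨ (∃ q', Step q e q' ∧ Z = Proc.par p q') := by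
  cases h with
  | parL q hs => exact Or.inl ⟨_, hs, rfl⟩
  | parR p hs => exact Or.inr ⟨_, hs, rfl⟩

lemma step_fin {X X₁ : Proc A} {e : A} (h : Step X e X₁) (hf : X.IsFin) : X₁.IsFin := by
  induction h with
  | pre => exact hf
  | repl => exact hf.elim
  | parL q hs ih => exact ⟨ih hf.1, hf.2⟩
  | parR p hs ih => exact ⟨hf.1, ih hf.2⟩

lemma step_size {X X₁ : Proc A} {e : A} (h : Step X e X₁) (hf : X.IsFin) :
    X.size = X₁.size + 1 := by
  induction h with
  | pre => simp [Proc.size]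
  | repl => exact hf.elim
  | parL q hs ih => have := ih hf.1; simp [Proc.size]; omega
  | parR p hs ih => have := ih hf.2; simp [Proc.size]; omega

lemma nsteps_fin {X Z : Proc A} {k : ℕ} (h : NSteps X k Z) (hf : X.IsFin) : Z.IsFin := by
  induction h with
  | zero => exact hf
  | succ hs _ ih => exact ih (step_fin hs hf)

lemma nsteps_size {X Z : Proc A} {k : ℕ} (h : NSteps X k Z) (hf : X.IsFin) :
    X.size = Z.size + k := by
  induction h with
  | zero => rfl
  | succ hs htr ih =>
      have := step_size hs hf
      have := ih (step_fin hs hf)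
      omega

/-! ### EqD helpers -/

lemma eqD_parL {p p' q : Proc A} (h : EqD p p') : EqD (Proc.par p q) (Proc.par p' q) :=
  EqD.congPar h (EqD.refl q)

lemma eqD_parR {p q q' : Proc A} (h : EqD q q') : EqD (Proc.par p q) (Proc.par p q') :=
  EqD.congPar (EqD.refl p) h

lemma eqD_nilL (p : Proc A) : EqD (Proc.par Proc.nil p) p :=
  (EqD.parComm _ _).trans (EqD.parNil p)

lemma eqD_rot (x y z : Proc A) :
    EqD (Proc.par (Proc.par x y) z) (Proc.par (Proc.par x z) y) :=
  (EqD.parAssoc x y z).trans <| (eqD_parR (EqD.parComm y z)).trans (EqD.symm (EqD.parAssoc x z y))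

lemma eqD_reps_congr {p q : Proc A} (n : ℕ) (h : EqD p q) :
    EqD (Proc.reps n p) (Proc.reps n q) := by
  induction n with
  | zero => exact EqD.refl _
  | succ n ih => exact EqD.congPar h ih

lemma reps_size (n : ℕ) (p : Proc A) : (Proc.reps n p).size = n * p.size := by
  induction n with
  | zero => simp [Proc.reps, Proc.size]
  | succ n ih => simp [Proc.reps, Proc.size, ih]; ring

lemma reps_fin {p : Proc A} (n : ℕ) (h : p.IsFin) : (Proc.reps n p).IsFin := by
  induction n with
  | zero => trivial
  | succ n ih => exact ⟨h, ih⟩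

lemma eqD_reps_add (i j : ℕ) (W : Proc A) :
    EqD (Proc.par (Proc.reps i W) (Proc.reps j W)) (Proc.reps (i + j) W) := by
  induction i with
  | zero => simpa [Proc.reps] using eqD_nilL (Proc.reps j W)
  | succ i ih =>
      have : EqD (Proc.par (Proc.par W (Proc.reps i W)) (Proc.reps j W))
          (Proc.par W (Proc.par (Proc.reps i W) (Proc.reps j W))) := EqD.parAssoc _ _ _
      have h2 := this.trans (eqD_parR ih)
      have : i + 1 + j = (i + j) + 1 := by omega
      rw [this]
      exact h2

lemma eqD_size {p q : Proc A} (h : EqD p q) : p.size = q.size := by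
  induction h with
  | refl => rfl
  | symm _ ih => omega
  | trans _ _ ih1 ih2 => omega
  | parComm p q => simp [Proc.size]; omega
  | parAssoc p q r => simp [Proc.size]; omega
  | parNil p => simp [Proc.size]
  | distr a F n hF => simp [Proc.size, reps_size]; ring
  | congPre a _ ih => simp [Proc.size, ih]
  | congPar _ _ ih1 ih2 => simp [Proc.size, ih1, ih2]
  | congRepl a _ ih => simp [Proc.size, ih]

lemma eqD_fin {p q : Proc A} (h : EqD p q) : p.IsFin ↔ q.IsFin := by
  induction h with
  | refl => exact Iff.rfl
  | symm _ ih => exact ih.symm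
  | trans _ _ ih1 ih2 => exact ih1.trans ih2
  | parComm p q => exact ⟨fun h => ⟨h.2, h.1⟩, fun h => ⟨h.2, h.1⟩⟩
  | parAssoc p q r =>
      exact ⟨fun h => ⟨h.1.1, h.1.2, h.2⟩, fun h => ⟨⟨h.1, h.2.1⟩, h.2.2⟩⟩
  | parNil p => exact ⟨fun h => h.1, fun h => ⟨h, trivial⟩⟩
  | distr a F n hF =>
      constructor
      · intro _; exact reps_fin _ hF
      · intro _; exact show Proc.IsFin (Proc.par _ _) from ⟨hF, reps_fin _ hF⟩
  | congPre a _ ih => exact ih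
  | congPar _ _ ih1 ih2 => exact ⟨fun h => ⟨ih1.mp h.1, ih2.mp h.2⟩, fun h => ⟨ih1.mpr h.1, ih2.mpr h.2⟩⟩
  | congRepl a _ ih => exact Iff.rfl

lemma wf_of_fin {p : Proc A} (h : p.IsFin) : p.Wf := by
  induction p with
  | nil => trivial
  | pre a p ih => exact h
  | par p q ih1 ih2 => exact ⟨ih1 h.1, ih2 h.2⟩
  | repl a p ih => exact h.elim

lemma replOnly_wf {S : Proc A} (h : ReplOnly S) : S.Wf := by
  induction S with
  | nil => trivial
  | pre a p ih => exact h.elim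
  | par p q ih1 ih2 => exact ⟨ih1 h.1, ih2 h.2⟩
  | repl a p ih => exact h

lemma replOnly_topRepl_fin {S : Proc A} {a : A} {G : Proc A}
    (hro : ReplOnly S) (h : TopRepl S a G) : G.IsFin := by
  induction h with
  | repl a p => exact hro
  | parL q _ ih => exact ih hro.1
  | parR p _ ih => exact ih hro.2

/-! ### reps step inversion -/

lemma reps_step_inv {u : ℕ} {W : Proc A} {e : A} {Z : Proc A}
    (h : Step (Proc.reps u W) e Z) :
    ∃ u' W₁, u = u' + 1 ∧ Step W e W₁ ∧ EqD Z (Proc.par W₁ (Proc.reps u' W)) := by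
  induction u generalizing Z with
  | zero => exact (step_nil_elim h).elim
  | succ u ih =>
      rcases step_par_inv h with ⟨W₁, hs, rfl⟩ | ⟨Z', hs, rfl⟩
      · exact ⟨u, W₁, rfl, hs, EqD.refl _⟩
      · rcases ih hs with ⟨u', W₁, rfl, hsW, hEq⟩
        refine ⟨u' + 1, W₁, rfl, hsW, ?_⟩
        have h1 : EqD (Proc.par W Z') (Proc.par W (Proc.par W₁ (Proc.reps u' W))) := eqD_parR hEq
        have h2 : EqD (Proc.par W (Proc.par W₁ (Proc.reps u' W)))
            (Proc.par W₁ (Proc.par W (Proc.reps u' W))) :=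
          ((EqD.parAssoc W W₁ _).symm.trans (eqD_parL (EqD.parComm W W₁))).trans
            (EqD.parAssoc W₁ W _)
        exact h1.trans h2

/-! ### Transport of steps along EqD -/

lemma eqD_step_both {p q : Proc A} (h : EqD p q) :
    (∀ e p', Step p e p' → ∃ q', Step q e q' ∧ EqD p' q') ∧
    (∀ e q', Step q e q' → ∃ p', Step p e p' ∧ EqD p' q') := by
  induction h with
  | refl p => exact ⟨fun e p' h => ⟨p', h, EqD.refl _⟩, fun e q' h => ⟨q', h, EqD.refl _⟩⟩
  | symm _ ih =>
      exact ⟨fun e p' h => (ih.2 e p' h).imp (fun x ⟨h1, h2⟩ => ⟨h1, h2.symm⟩) |>.imp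
          (fun x h => h) , fun e q' h => (ih.1 e q' h).imp fun x ⟨h1, h2⟩ => ⟨h1, h2.symm⟩⟩
  | trans _ _ ih1 ih2 =>
      constructor
      · intro e p' h
        obtain ⟨m, hm, hEq⟩ := ih1.1 e p' h
        obtain ⟨r, hr, hEq2⟩ := ih2.1 e m hm
        exact ⟨r, hr, hEq.trans hEq2⟩
      · intro e q' h
        obtain ⟨m, hm, hEq⟩ := ih2.2 e q' h
        obtain ⟨r, hr, hEq2⟩ := ih1.2 e m hm
        exact ⟨r, hr, hEq2.trans hEq⟩
  | parComm p q =>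
      constructor
      · intro e p' h
        rcases step_par_inv h with ⟨x, hs, rfl⟩ | ⟨x, hs, rfl⟩
        · exact ⟨Proc.par q x, Step.parR q hs, EqD.parComm _ _⟩
        · exact ⟨Proc.par x p, Step.parL p hs, EqD.parComm _ _⟩
      · intro e q' h
        rcases step_par_inv h with ⟨x, hs, rfl⟩ | ⟨x, hs, rfl⟩
        · exact ⟨Proc.par p x, Step.parR p hs, EqD.parComm _ _⟩
        · exact ⟨Proc.par x q, Step.parL q hs, EqD.parComm _ _⟩
  | parAssoc p q r =>
      constructor
      · intro e p' h
        rcases step_par_inv h with ⟨x, hs, rfl⟩ | ⟨x, hs, rfl⟩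
        · rcases step_par_inv hs with ⟨y, hs2, rfl⟩ | ⟨y, hs2, rfl⟩
          · exact ⟨_, Step.parL _ hs2, EqD.parAssoc _ _ _⟩
          · exact ⟨_, Step.parR _ (Step.parL _ hs2), EqD.parAssoc _ _ _⟩
        · exact ⟨_, Step.parR _ (Step.parR _ hs), EqD.parAssoc _ _ _⟩
      · intro e q' h
        rcases step_par_inv h with ⟨x, hs, rfl⟩ | ⟨x, hs, rfl⟩
        · exact ⟨_, Step.parL _ (Step.parL _ hs), EqD.parAssoc _ _ _⟩
        · rcases step_par_inv hs with ⟨y, hs2, rfl⟩ | ⟨y, hs2, rfl⟩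
          · exact ⟨_, Step.parL _ (Step.parR _ hs2), EqD.parAssoc _ _ _⟩
          · exact ⟨_, Step.parR _ hs2, EqD.parAssoc _ _ _⟩
  | parNil p =>
      constructor
      · intro e p' h
        rcases step_par_inv h with ⟨x, hs, rfl⟩ | ⟨x, hs, rfl⟩
        · exact ⟨x, hs, EqD.parNil x⟩
        · exact (step_nil_elim hs).elim
      · intro e q' h
        exact ⟨Proc.par q' Proc.nil, Step.parL _ h, EqD.parNil q'⟩
  | distr a F n hF =>
      constructor
      · intro e p' h
        obtain ⟨rfl, rfl⟩ := step_pre_inv h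
        exact ⟨_, Step.parL _ Step.pre, EqD.refl _⟩
      · intro e q' h
        rcases reps_step_inv h with ⟨u', W₁, hu, hsW, hEq⟩
        obtain ⟨rfl, rfl⟩ := step_pre_inv hsW
        have hu' : u' = n := by omega
        subst hu'
        exact ⟨_, Step.pre, hEq.symm⟩
  | congPre a h =>
      rename_i pp qq _
      constructor
      · intro e p' hs
        obtain ⟨rfl, rfl⟩ := step_pre_inv hs
        exact ⟨qq, Step.pre, h⟩
      · intro e q' hs
        obtain ⟨rfl, rfl⟩ := step_pre_inv hs
        exact ⟨pp, Step.pre, h⟩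
  | congPar h1 h2 ih1 ih2 =>
      constructor
      · intro e p' hs
        rcases step_par_inv hs with ⟨x, hx, rfl⟩ | ⟨x, hx, rfl⟩
        · obtain ⟨y, hy, hEq⟩ := ih1.1 e x hx
          exact ⟨_, Step.parL _ hy, EqD.congPar hEq h2⟩
        · obtain ⟨y, hy, hEq⟩ := ih2.1 e x hx
          exact ⟨_, Step.parR _ hy, EqD.congPar h1 hEq⟩
      · intro e q' hs
        rcases step_par_inv hs with ⟨x, hx, rfl⟩ | ⟨x, hx, rfl⟩
        · obtain ⟨y, hy, hEq⟩ := ih1.2 e x hx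
          exact ⟨_, Step.parL _ hy, EqD.congPar hEq h2⟩
        · obtain ⟨y, hy, hEq⟩ := ih2.2 e x hx
          exact ⟨_, Step.parR _ hy, EqD.congPar h1 hEq⟩
  | congRepl a h =>
      rename_i pp qq _
      constructor
      · intro e p' hs
        obtain ⟨rfl, rfl⟩ := step_repl_inv hs
        exact ⟨_, Step.repl, EqD.congPar (EqD.congRepl _ h) h⟩
      · intro e q' hs
        obtain ⟨rfl, rfl⟩ := step_repl_inv hs
        exact ⟨_, Step.repl, EqD.congPar (EqD.congRepl _ h) h⟩

lemma eqD_step {p q : Proc A} (h : EqD p q) {e : A} {p' : Proc A} (hs : Step p e p') :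
    ∃ q', Step q e q' ∧ EqD p' q' := (eqD_step_both h).1 e p' hs

end Aux
end CCS
namespace CCS
namespace Aux

open Proc

variable {A : Type}

/-! ### Bisimilarity toolkit -/

lemma bisim_symm {p q : Proc A} (h : Bisim p q) : Bisim q p := by
  obtain ⟨R, ⟨hsym, hstep⟩, hpq⟩ := h
  exact ⟨R, ⟨hsym, hstep⟩, hsym hpq⟩

lemma bisim_trans {p q r : Proc A} (h1 : Bisim p q) (h2 : Bisim q r) : Bisim p r := by
  obtain ⟨R1, ⟨hs1, hb1⟩, h1⟩ := h1
  obtain ⟨R2, ⟨hs2, hb2⟩, h2⟩ := h2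
  refine ⟨fun x z => (∃ y, R1 x y ∧ R2 y z) ∨ (∃ y, R2 x y ∧ R1 y z), ⟨?_, ?_⟩, Or.inl ⟨q, h1, h2⟩⟩
  · rintro x z (⟨y, hxy, hyz⟩ | ⟨y, hxy, hyz⟩)
    · exact Or.inr ⟨y, hs2 hyz, hs1 hxy⟩
    · exact Or.inl ⟨y, hs1 hyz, hs2 hxy⟩
  · rintro x z (⟨y, hxy, hyz⟩ | ⟨y, hxy, hyz⟩) <;> intro e x' hx
    · obtain ⟨y', hy, hR1⟩ := hb1 x y hxy e x' hx
      obtain ⟨z', hz, hR2⟩ := hb2 y z hyz e y' hy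
      exact ⟨z', hz, Or.inl ⟨y', hR1, hR2⟩⟩
    · obtain ⟨y', hy, hR2⟩ := hb2 x y hxy e x' hx
      obtain ⟨z', hz, hR1⟩ := hb1 y z hyz e y' hy
      exact ⟨z', hz, Or.inr ⟨y', hR2, hR1⟩⟩

lemma bisim_of_eqD {p q : Proc A} (h : EqD p q) : Bisim p q := by
  refine ⟨EqD, ⟨fun x y h => h.symm, ?_⟩, h⟩
  intro x y hxy e x' hx
  exact eqD_step hxy hx

/-! ### products of lists and multisets -/

def prodL : List (Proc A) → Proc A
  | [] => Proc.nil
  | x :: xs => Proc.par x (prodL xs)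

lemma prodL_reps (n : ℕ) (x : Proc A) : prodL (List.replicate n x) = Proc.reps n x := by
  induction n with
  | zero => rfl
  | succ n ih => rw [List.replicate_succ, prodL, ih, Proc.reps]

lemma eqD_prodL_append (L1 L2 : List (Proc A)) :
    EqD (prodL (L1 ++ L2)) (Proc.par (prodL L1) (prodL L2)) := by
  induction L1 with
  | nil => exact (eqD_nilL _).symm
  | cons x xs ih =>
      exact (eqD_parR ih).trans (EqD.parAssoc x (prodL xs) (prodL L2)).symm

lemma eqD_prodL_perm {L1 L2 : List (Proc A)} (h : L1.Perm L2) :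
    EqD (prodL L1) (prodL L2) := by
  induction h with
  | nil => exact EqD.refl _
  | cons x _ ih => exact eqD_parR ih
  | swap x y l =>
      exact ((EqD.parAssoc y x (prodL l)).symm.trans
        (eqD_parL (EqD.parComm y x))).trans (EqD.parAssoc x y (prodL l))
  | trans _ _ ih1 ih2 => exact ih1.trans ih2

lemma prodL_injective : Function.Injective (prodL (A := A)) := by
  intro L1 L2 h
  induction L1 generalizing L2 with
  | nil => cases L2 with
    | nil => rfl
    | cons y ys => exact absurd h (by simp [prodL])
  | cons x xs ih =>
      cases L2 with
      | nil => exact absurd h (by simp [prodL])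
      | cons y ys =>
          simp only [prodL, Proc.par.injEq] at h
          rw [h.1, ih h.2]

lemma prodL_fin {L : List (Proc A)} (h : ∀ x ∈ L, Proc.IsFin x) : (prodL L).IsFin := by
  induction L with
  | nil => trivial
  | cons x xs ih => exact ⟨h x (by simp), ih fun y hy => h y (by simp [hy])⟩

lemma prodL_size (L : List (Proc A)) : (prodL L).size = (L.map Proc.size).sum := by
  induction L with
  | nil => rfl
  | cons x xs ih => simp [prodL, Proc.size, ih]

noncomputable def prodM (M : Multiset (Proc A)) : Proc A := prodL M.toList

lemma prodM_injective : Function.Injective (prodM (A := A)) := by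
  intro M1 M2 h
  have := prodL_injective h
  have h2 : (M1.toList : Multiset (Proc A)) = M2.toList := by rw [this]
  rwa [Multiset.coe_toList, Multiset.coe_toList] at h2

lemma eqD_prodL_of_coe {L : List (Proc A)} {M : Multiset (Proc A)} (h : (L : Multiset (Proc A)) = M) :
    EqD (prodM M) (prodL L) := by
  apply eqD_prodL_perm
  rw [← Multiset.coe_eq_coe, Multiset.coe_toList, h]

lemma eqD_prodM_add (M1 M2 : Multiset (Proc A)) :
    EqD (prodM (M1 + M2)) (Proc.par (prodM M1) (prodM M2)) := by
  have h : ((M1.toList ++ M2.toList : List (Proc A)) : Multiset (Proc A)) = M1 + M2 := by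
    rw [← Multiset.coe_add, Multiset.coe_toList, Multiset.coe_toList]
  exact (eqD_prodL_of_coe h).trans (eqD_prodL_append _ _)

lemma eqD_prodM_replicate (j : ℕ) (x : Proc A) :
    EqD (prodM (Multiset.replicate j x)) (Proc.reps j x) := by
  have h : ((List.replicate j x : List (Proc A)) : Multiset (Proc A)) = Multiset.replicate j x :=
    Multiset.coe_replicate _ _
  exact (eqD_prodL_of_coe h).trans (by rw [prodL_reps]; exact EqD.refl _)

def msSize (M : Multiset (Proc A)) : ℕ := (M.map Proc.size).sum

lemma prodM_size (M : Multiset (Proc A)) : (prodM M).size = msSize M := by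
  rw [prodM, prodL_size, msSize]
  conv_rhs => rw [← Multiset.coe_toList M]
  rw [Multiset.map_coe, Multiset.sum_coe]

lemma prodM_fin {M : Multiset (Proc A)} (h : ∀ x ∈ M, Proc.IsFin x) : (prodM M).IsFin :=
  prodL_fin fun x hx => h x (by rwa [← Multiset.mem_toList])

lemma mem_size_le_msSize {M : Multiset (Proc A)} {x : Proc A} (h : x ∈ M) :
    x.size ≤ msSize M := by
  have : x.size ∈ M.map Proc.size := Multiset.mem_map_of_mem _ h
  exact Multiset.single_le_sum (fun _ _ => Nat.zero_le _) _ this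

lemma msSize_add (M1 M2 : Multiset (Proc A)) : msSize (M1 + M2) = msSize M1 + msSize M2 := by
  simp [msSize]

lemma msSize_replicate (j : ℕ) (x : Proc A) : msSize (Multiset.replicate j x) = j * x.size := by
  simp [msSize, Multiset.map_replicate, Multiset.sum_replicate, smul_eq_mul]

/-! ### the normal form function -/

open Classical in
noncomputable def preNF (a : A) (M : Multiset (Proc A)) : Multiset (Proc A) :=
  if h : ∃ p : Multiset (Proc A) × ℕ, 0 < p.2 ∧
      M = p.1 + Multiset.replicate p.2 (Proc.pre a (prodM p.1)) then
    Multiset.replicate (h.choose.2 + 1) (Proc.pre a (prodM h.choose.1))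
  else {Proc.pre a (prodM M)}

lemma decomp_unique (a : A) {M M₀ M₁ : Multiset (Proc A)} {k l : ℕ}
    (hk : 0 < k) (hl : 0 < l)
    (h₀ : M = M₀ + Multiset.replicate k (Proc.pre a (prodM M₀)))
    (h₁ : M = M₁ + Multiset.replicate l (Proc.pre a (prodM M₁))) :
    M₀ = M₁ ∧ k = l := by
  by_cases hMeq : M₀ = M₁
  · subst hMeq
    refine ⟨rfl, ?_⟩
    rw [h₀] at h₁
    have := add_left_cancel h₁
    have hc := congrArg Multiset.card this
    simpa using hc
  · exfalso
    have hA : Proc.pre a (prodM M₀) ≠ Proc.pre a (prodM M₁) := by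
      intro h
      apply hMeq
      apply prodM_injective
      injection h
    -- A₁ ∈ M₀
    have h1mem : Proc.pre a (prodM M₁) ∈ M₀ := by
      have : Proc.pre a (prodM M₁) ∈ M := by
        rw [h₁]
        exact Multiset.mem_add.mpr (Or.inr (Multiset.mem_replicate.mpr ⟨by omega, rfl⟩))
      rw [h₀] at this
      rcases Multiset.mem_add.mp this with h | h
      · exact h
      · exact absurd (Multiset.eq_of_mem_replicate h) hA.symm
    have h0mem : Proc.pre a (prodM M₀) ∈ M₁ := by
      have : Proc.pre a (prodM M₀) ∈ M := by
        rw [h₀]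
        exact Multiset.mem_add.mpr (Or.inr (Multiset.mem_replicate.mpr ⟨by omega, rfl⟩))
      rw [h₁] at this
      rcases Multiset.mem_add.mp this with h | h
      · exact h
      · exact absurd (Multiset.eq_of_mem_replicate h) hA
    have s1 : (Proc.pre a (prodM M₁)).size ≤ msSize M₀ := mem_size_le_msSize h1mem
    have s0 : (Proc.pre a (prodM M₀)).size ≤ msSize M₁ := mem_size_le_msSize h0mem
    simp only [Proc.size, prodM_size] at s1 s0
    omega

lemma preNF_char (a : A) (M : Multiset (Proc A)) :
    ∃ M₀ j, 0 < j ∧ preNF a M = Multiset.replicate j (Proc.pre a (prodM M₀)) ∧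
      M = M₀ + Multiset.replicate (j - 1) (Proc.pre a (prodM M₀)) := by
  rw [preNF]
  split_ifs with h
  · obtain ⟨hpos, hM⟩ := h.choose_spec
    exact ⟨h.choose.1, h.choose.2 + 1, by omega, rfl, by simpa using hM⟩
  · exact ⟨M, 1, by omega, rfl, by simp⟩

lemma preNF_eq (a : A) {M M₀ : Multiset (Proc A)} {k : ℕ} (hk : 0 < k)
    (h : M = M₀ + Multiset.replicate k (Proc.pre a (prodM M₀))) :
    preNF a M = Multiset.replicate (k + 1) (Proc.pre a (prodM M₀)) := by
  have hex : ∃ p : Multiset (Proc A) × ℕ, 0 < p.2 ∧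
      M = p.1 + Multiset.replicate p.2 (Proc.pre a (prodM p.1)) := ⟨(M₀, k), hk, h⟩
  rw [preNF, dif_pos hex]
  obtain ⟨hpos, hM⟩ := hex.choose_spec
  obtain ⟨h1, h2⟩ := decomp_unique a hpos hk hM h
  rw [h1, h2]

noncomputable def nf : Proc A → Multiset (Proc A)
  | .nil => 0
  | .par p q => nf p + nf q
  | .pre a p => preNF a (nf p)
  | .repl _ _ => 0

lemma nf_reps (n : ℕ) (X : Proc A) : nf (Proc.reps n X) = n • nf X := by
  induction n with
  | zero => rw [Proc.reps, zero_nsmul]; rfl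
  | succ n ih => rw [Proc.reps, nf, ih, succ_nsmul, add_comm]

lemma nsmul_replicate' (n j : ℕ) (x : Proc A) :
    n • Multiset.replicate j x = Multiset.replicate (n * j) x := by
  induction n with
  | zero => simp
  | succ n ih => rw [succ_nsmul, ih, ← Multiset.replicate_add]; congr 1; ring

/-- characterisation of `nf` on prefixed processes -/
lemma nf_pre_char (a : A) (p : Proc A) :
    ∃ M₀ j, 0 < j ∧ nf (Proc.pre a p) = Multiset.replicate j (Proc.pre a (prodM M₀)) ∧
      nf p = M₀ + Multiset.replicate (j - 1) (Proc.pre a (prodM M₀)) :=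
  preNF_char a (nf p)

/-- Soundness: `≡D` preserves normal forms. -/
lemma nf_eqD {p q : Proc A} (h : EqD p q) : nf p = nf q := by
  induction h with
  | refl => rfl
  | symm _ ih => exact ih.symm
  | trans _ _ ih1 ih2 => exact ih1.trans ih2
  | parComm p q => simp [nf, add_comm]
  | parAssoc p q r => simp [nf, add_assoc]
  | parNil p => simp [nf]
  | distr a F n hF =>
      obtain ⟨M₀, j, hj, hnfp, hnfF⟩ := nf_pre_char a F
      have lhs : nf (Proc.pre a (Proc.par F (Proc.reps n (Proc.pre a F)))) =
          preNF a (nf F + n • nf (Proc.pre a F)) := by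
        rw [show nf (Proc.pre a (Proc.par F (Proc.reps n (Proc.pre a F)))) =
          preNF a (nf (Proc.par F (Proc.reps n (Proc.pre a F)))) from rfl]
        rw [show nf (Proc.par F (Proc.reps n (Proc.pre a F))) =
          nf F + nf (Proc.reps n (Proc.pre a F)) from rfl]
        rw [nf_reps]
      have rhs : nf (Proc.reps (n+1) (Proc.pre a F)) = (n+1) • nf (Proc.pre a F) :=
        nf_reps _ _
      rw [lhs, rhs, hnfp, hnfF, nsmul_replicate', nsmul_replicate']
      rcases Nat.eq_zero_or_pos (j - 1 + n * j) with h0 | hpos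
      · have hj1 : j = 1 := by omega
        subst hj1
        have hn0 : n = 0 := by simpa using h0
        subst hn0
        simp only [Nat.sub_self, Multiset.replicate_zero, add_zero] at hnfF
        have hx : preNF a (nf F) = Multiset.replicate 1 (Proc.pre a (prodM M₀)) := hnfp
        rw [hnfF] at hx
        simpa using hx
      · have hagg : M₀ + Multiset.replicate (j - 1) (Proc.pre a (prodM M₀)) +
            Multiset.replicate (n * j) (Proc.pre a (prodM M₀)) =
            M₀ + Multiset.replicate (j - 1 + n * j) (Proc.pre a (prodM M₀)) := by
          rw [add_assoc, Multiset.replicate_add]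
        rw [hagg, preNF_eq a hpos rfl]
        congr 1
        have : (n + 1) * j = n * j + j := by ring
        omega
  | congPre a _ ih => simp [nf, ih]
  | congPar _ _ ih1 ih2 => simp [nf, ih1, ih2]
  | congRepl a _ ih => simp [nf]

lemma nf_fin {P : Proc A} (h : P.IsFin) : ∀ x ∈ nf P, x.IsFin := by
  induction P with
  | nil => simp [nf]
  | pre a p ih =>
      intro x hx
      obtain ⟨M₀, j, hj, hnf, hnfp⟩ := nf_pre_char a p
      rw [hnf] at hx
      have hx' := Multiset.eq_of_mem_replicate hx
      subst hx'
      have hM₀fin : ∀ y ∈ M₀, Proc.IsFin y := by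
        intro y hy
        exact ih h y (by rw [hnfp]; exact Multiset.mem_add.mpr (Or.inl hy))
      exact prodM_fin hM₀fin
  | par p q ih1 ih2 =>
      intro x hx
      rcases Multiset.mem_add.mp (by simpa [nf] using hx) with h' | h'
      · exact ih1 h.1 x h'
      · exact ih2 h.2 x h'
  | repl a p ih => simp [nf]

lemma msSize_nf {P : Proc A} (h : P.IsFin) : msSize (nf P) = P.size := by
  induction P with
  | nil => simp [nf, msSize, Proc.size]
  | pre a p ih =>
      obtain ⟨M₀, j, hj, hnf, hnfp⟩ := nf_pre_char a p
      have hp := ih h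
      rw [hnfp, msSize_add, msSize_replicate] at hp
      rw [hnf, msSize_replicate]
      simp only [Proc.size, prodM_size] at *
      have : p.size + 1 = j * (msSize M₀ + 1) := by
        rw [← hp]; cases j with
        | zero => omega
        | succ j => simp [Nat.succ_sub_one]; ring
      simp [Proc.size, this]
  | par p q ih1 ih2 =>
      simp only [nf, msSize_add, Proc.size]
      rw [ih1 h.1, ih2 h.2]
  | repl a p ih => exact h.elim

/-- Completeness: every finite process is `≡D` its normal form realisation. -/
lemma eqD_nf {P : Proc A} (h : P.IsFin) : EqD P (prodM (nf P)) := by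
  induction P with
  | nil =>
      have : prodM (nf (Proc.nil : Proc A)) = Proc.nil := by
        rw [show nf (Proc.nil : Proc A) = 0 from rfl, prodM, Multiset.toList_zero]; rfl
      rw [this]; exact EqD.refl _
  | pre a p ih =>
      obtain ⟨M₀, j, hj, hnf, hnfp⟩ := nf_pre_char a p
      rw [hnf]
      have step1 : EqD (Proc.pre a p) (Proc.pre a (prodM (nf p))) := EqD.congPre a (ih h)
      have hM₀fin : Proc.IsFin (prodM M₀) := by
        apply prodM_fin
        intro y hy
        exact nf_fin (P := p) h y (by rw [hnfp]; exact Multiset.mem_add.mpr (Or.inl hy))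
      rcases Nat.lt_or_ge 1 j with hj2 | hj1
      · -- j ≥ 2 : use the distribution law
        have hd : EqD (prodM (nf p))
            (Proc.par (prodM M₀) (Proc.reps (j-1) (Proc.pre a (prodM M₀)))) := by
          rw [hnfp]
          exact (eqD_prodM_add _ _).trans (eqD_parR (eqD_prodM_replicate _ _))
        have : EqD (Proc.pre a p)
            (Proc.pre a (Proc.par (prodM M₀) (Proc.reps (j-1) (Proc.pre a (prodM M₀))))) :=
          step1.trans (EqD.congPre a hd)
        have hdist := EqD.distr a (prodM M₀) (j-1) hM₀fin
        have : EqD (Proc.pre a p) (Proc.reps (j - 1 + 1) (Proc.pre a (prodM M₀))) :=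
          this.trans hdist
        rw [show j - 1 + 1 = j by omega] at this
        exact this.trans (eqD_prodM_replicate j _).symm
      · -- j = 1
        have hj1' : j = 1 := by omega
        subst hj1'
        simp only [Nat.sub_self, Multiset.replicate_zero, add_zero] at hnfp
        have : EqD (Proc.pre a p) (Proc.pre a (prodM M₀)) := by
          rw [← hnfp]; exact step1
        refine this.trans ?_
        refine EqD.symm ?_
        exact (eqD_prodM_replicate 1 _).trans (EqD.parNil _)
  | par p q ih1 ih2 =>
      rw [nf]
      exact (EqD.congPar (ih1 h.1) (ih2 h.2)).trans (eqD_prodM_add _ _).symm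
  | repl a p ih => exact h.elim

lemma nf_replOnly {S : Proc A} (h : ReplOnly S) : nf S = 0 := by
  induction S with
  | nil => rfl
  | pre a p ih => exact h.elim
  | par p q ih1 ih2 => simp [nf, ih1 h.1, ih2 h.2]
  | repl a p ih => rfl

end Aux
end CCS
namespace CCS
namespace Aux

open Proc

variable {A : Type}

/-! ### the pruning relation `Er` -/

inductive Er (a : A) (N : Proc A) : Proc A → Proc A → Prop
  | nil : Er a N Proc.nil Proc.nil
  | pre (c : A) {p q : Proc A} : Er a N p q → Er a N (Proc.pre c p) (Proc.pre c q)
  | par {p q p' q' : Proc A} : Er a N p p' → Er a N q q' →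
      Er a N (Proc.par p q) (Proc.par p' q')
  | del (c : A) (H : Proc A) (j : ℕ) :
      EqD (Proc.pre c H) (Proc.reps j (Proc.pre a N)) → Er a N (Proc.pre c H) Proc.nil

/-- `Er` up to `≡D` on both sides. -/
def ErU (a : A) (N : Proc A) (u v : Proc A) : Prop :=
  ∃ u' v', EqD u u' ∧ Er a N u' v' ∧ EqD v' v

lemma er_refl {a : A} {N : Proc A} {p : Proc A} (h : p.IsFin) : Er a N p p := by
  induction p with
  | nil => exact Er.nil
  | pre c p ih => exact Er.pre c (ih h)
  | par p q ih1 ih2 => exact Er.par (ih1 h.1) (ih2 h.2)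
  | repl c p ih => exact h.elim

lemma er_fin_r {a : A} {N : Proc A} {p q : Proc A} (h : Er a N p q) : q.IsFin := by
  induction h with
  | nil => trivial
  | pre c _ ih => exact ih
  | par _ _ ih1 ih2 => exact ⟨ih1, ih2⟩
  | del c H j _ => trivial

lemma reps_nil_eqD (k : ℕ) : EqD (Proc.reps k (Proc.nil : Proc A)) Proc.nil := by
  induction k with
  | zero => exact EqD.refl _
  | succ k ih => exact (eqD_parR ih).trans (EqD.parNil _)

lemma er_reps_del (a : A) (N : Proc A) (k : ℕ) :
    Er a N (Proc.reps k (Proc.pre a N)) (Proc.reps k (Proc.nil : Proc A)) := by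
  induction k with
  | zero => exact Er.nil
  | succ k ih =>
      exact Er.par (Er.del a N 1 (EqD.symm (EqD.parNil _))) ih

lemma er_fwd {a : A} {N : Proc A} (hNfin : N.IsFin) {X Y : Proc A} (h : Er a N X Y)
    {e : A} {X₁ : Proc A} (hs : Step X e X₁) :
    (∃ Y₁, Step Y e Y₁ ∧ ErU a N X₁ Y₁) ∨ (e = a ∧ ErU a N X₁ (Proc.par N Y)) := by
  induction h generalizing X₁ with
  | nil => exact (step_nil_elim hs).elim
  | @pre c p q hpq ih =>
      obtain ⟨rfl, rfl⟩ := step_pre_inv hs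
      exact Or.inl ⟨q, Step.pre, _, q, EqD.refl _, hpq, EqD.refl _⟩
  | @par p q p' q' h1 h2 ih1 ih2 =>
      rcases step_par_inv hs with ⟨p₁, hsp, rfl⟩ | ⟨q₁, hsq, rfl⟩
      · rcases ih1 hsp with ⟨Y₁, hsY, u', v', e1, her, e2⟩ | ⟨rfl, u', v', e1, her, e2⟩
        · exact Or.inl ⟨Proc.par Y₁ q', Step.parL _ hsY, Proc.par u' q, Proc.par v' q',
            EqD.congPar e1 (EqD.refl q), Er.par her h2, EqD.congPar e2 (EqD.refl q')⟩
        · refine Or.inr ⟨rfl, Proc.par u' q, Proc.par v' q',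
            EqD.congPar e1 (EqD.refl q), Er.par her h2, ?_⟩
          exact (EqD.congPar e2 (EqD.refl q')).trans (EqD.parAssoc N p' q')
      · rcases ih2 hsq with ⟨Y₁, hsY, u', v', e1, her, e2⟩ | ⟨rfl, u', v', e1, her, e2⟩
        · exact Or.inl ⟨Proc.par p' Y₁, Step.parR _ hsY, Proc.par p u', Proc.par p' v',
            EqD.congPar (EqD.refl p) e1, Er.par h1 her, EqD.congPar (EqD.refl p') e2⟩
        · refine Or.inr ⟨rfl, Proc.par p u', Proc.par p' v',
            EqD.congPar (EqD.refl p) e1, Er.par h1 her, ?_⟩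
          have h3 : EqD (Proc.par p' v') (Proc.par p' (Proc.par N q')) :=
            EqD.congPar (EqD.refl p') e2
          refine h3.trans ?_
          refine ((EqD.parAssoc p' N q').symm.trans ?_).trans (EqD.parAssoc N p' q')
          exact eqD_parL (EqD.parComm p' N)
  | del c H j hd =>
      obtain ⟨he, hX⟩ := step_pre_inv hs
      subst hX
      obtain ⟨Z, hsZ, hHZ⟩ := eqD_step hd Step.pre
      obtain ⟨j', W₁, hj, hsW, hZeq⟩ := reps_step_inv hsZ
      obtain ⟨hca, hW⟩ := step_pre_inv hsW
      rw [hW] at hZeq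
      refine Or.inr ⟨he.trans hca, Proc.par N (Proc.reps j' (Proc.pre a N)),
        Proc.par N (Proc.reps j' (Proc.nil : Proc A)),
        hHZ.trans hZeq, Er.par (er_refl hNfin) (er_reps_del a N j'), ?_⟩
      exact EqD.congPar (EqD.refl N) (reps_nil_eqD j')

lemma er_bwd {a : A} {N : Proc A} {X Y : Proc A} (h : Er a N X Y)
    {e : A} {Y₁ : Proc A} (hs : Step Y e Y₁) :
    ∃ X₁, Step X e X₁ ∧ ErU a N X₁ Y₁ := by
  induction h generalizing Y₁ with
  | nil => exact (step_nil_elim hs).elim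
  | @pre c p q hpq ih =>
      obtain ⟨rfl, rfl⟩ := step_pre_inv hs
      exact ⟨_, Step.pre, _, _, EqD.refl _, hpq, EqD.refl _⟩
  | @par p q p' q' h1 h2 ih1 ih2 =>
      rcases step_par_inv hs with ⟨p₁, hsp, rfl⟩ | ⟨q₁, hsq, rfl⟩
      · obtain ⟨X₁, hsX, u', v', e1, her, e2⟩ := ih1 hsp
        exact ⟨Proc.par X₁ q, Step.parL _ hsX, Proc.par u' q, Proc.par v' q',
          EqD.congPar e1 (EqD.refl q), Er.par her h2, EqD.congPar e2 (EqD.refl q')⟩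
      · obtain ⟨X₁, hsX, u', v', e1, her, e2⟩ := ih2 hsq
        exact ⟨Proc.par p X₁, Step.parR _ hsX, Proc.par p u', Proc.par p' v',
          EqD.congPar (EqD.refl p) e1, Er.par h1 her, EqD.congPar (EqD.refl p') e2⟩
  | del c H j hd => exact (step_nil_elim hs).elim

end Aux
end CCS
namespace CCS
namespace Aux

open Proc

variable {A : Type}

/-! ### unstep and extraction -/

lemma unstep {a : A} {N : Proc A} {X X₁ : Proc A} {e : A} (hs : Step X e X₁)
    {Y₁ : Proc A} (h : Er a N X₁ Y₁) :
    ∃ Y, Er a N X Y ∧ Y.size = Y₁.size + 1 := by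
  induction hs generalizing Y₁ with
  | @pre c p =>
      exact ⟨Proc.pre c Y₁, Er.pre c h, by simp [Proc.size]⟩
  | repl =>
      -- this case cannot arise in our use, but is provable? no: X₁ has repl; Er of repl impossible
      cases h with
      | par h1 h2 => cases h1
  | @parL p e' p' q hstep ih =>
      cases h with
      | @par _ _ y1 y2 h1 h2 =>
          obtain ⟨Y', hEr, hsz⟩ := ih h1
          exact ⟨Proc.par Y' y2, Er.par hEr h2, by simp [Proc.size]; omega⟩
  | @parR q e' q' p hstep ih =>
      cases h with
      | @par _ _ y1 y2 h1 h2 =>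
          obtain ⟨Y', hEr, hsz⟩ := ih h2
          exact ⟨Proc.par y1 Y', Er.par h1 hEr, by simp [Proc.size]; omega⟩

lemma er_all {a : A} {N : Proc A} {F : Proc A} (hfin : F.IsFin)
    (hall : ∀ x ∈ nf F, x = Proc.pre a N) :
    ∃ Y, Er a N F Y ∧ Y.size = 0 := by
  induction F with
  | nil => exact ⟨Proc.nil, Er.nil, rfl⟩
  | pre c p ih =>
      have hrep : nf (Proc.pre c p) =
          Multiset.replicate (Multiset.card (nf (Proc.pre c p))) (Proc.pre a N) :=
        Multiset.eq_replicate_of_mem hall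
      have heq : EqD (Proc.pre c p)
          (Proc.reps (Multiset.card (nf (Proc.pre c p))) (Proc.pre a N)) := by
        refine (eqD_nf hfin).trans ?_
        conv_lhs => rw [hrep]
        exact eqD_prodM_replicate _ _
      exact ⟨Proc.nil, Er.del c p _ heq, rfl⟩
  | par p q ih1 ih2 =>
      have h1 : ∀ x ∈ nf p, x = Proc.pre a N := fun x hx =>
        hall x (Multiset.mem_add.mpr (Or.inl hx))
      have h2 : ∀ x ∈ nf q, x = Proc.pre a N := fun x hx =>
        hall x (Multiset.mem_add.mpr (Or.inr hx))
      obtain ⟨Y1, hE1, hs1⟩ := ih1 hfin.1 h1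
      obtain ⟨Y2, hE2, hs2⟩ := ih2 hfin.2 h2
      exact ⟨Proc.par Y1 Y2, Er.par hE1 hE2, by simp [Proc.size, hs1, hs2]⟩
  | repl c p ih => exact hfin.elim

lemma extract {a : A} {N : Proc A} {F F₂ : Proc A} {k : ℕ}
    (htr : NSteps F k F₂) (hfin : F.IsFin)
    (hall : ∀ x ∈ nf F₂, x = Proc.pre a N) :
    ∃ Y, Er a N F Y ∧ Y.size = k := by
  induction htr with
  | zero => exact er_all hfin hall
  | @succ p e p' k q hs htr ih =>
      obtain ⟨Y₁, hE, hsz⟩ := ih (step_fin hs hfin) hall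
      obtain ⟨Y, hE', hsz'⟩ := unstep hs hE
      exact ⟨Y, hE', by omega⟩

/-! ### subterm occurrences and atom containment -/

inductive SubP : Proc A → Proc A → Prop
  | refl (p : Proc A) : SubP p p
  | pre {W p : Proc A} (c : A) : SubP W p → SubP W (Proc.pre c p)
  | parL {W p : Proc A} (q : Proc A) : SubP W p → SubP W (Proc.par p q)
  | parR {W q : Proc A} (p : Proc A) : SubP W q → SubP W (Proc.par p q)

lemma subP_trans {x y z : Proc A} (h1 : SubP x y) (h2 : SubP y z) : SubP x z := by
  induction h2 with
  | refl => exact h1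
  | pre c _ ih => exact SubP.pre c ih
  | parL q _ ih => exact SubP.parL q ih
  | parR p _ ih => exact SubP.parR p ih

lemma subP_prodL_mem {x : Proc A} {L : List (Proc A)} (h : x ∈ L) : SubP x (prodL L) := by
  induction L with
  | nil => cases h
  | cons y ys ih =>
      rcases List.mem_cons.mp h with rfl | h'
      · exact SubP.parL _ (SubP.refl x)
      · exact SubP.parR _ (ih h')

lemma subP_prodM_mem {x : Proc A} {M : Multiset (Proc A)} (h : x ∈ M) : SubP x (prodM M) :=
  subP_prodL_mem (by rwa [Multiset.mem_toList])

def OccIn : Proc A → Proc A → Prop :=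
  Relation.ReflTransGen (fun x y => ∃ b M₀, y = Proc.pre b (prodM M₀) ∧ x ∈ M₀)

lemma occIn_size {x y : Proc A} (h : OccIn x y) : x.size ≤ y.size := by
  induction h with
  | refl => exact le_refl _
  | tail _ hstep ih =>
      obtain ⟨b, M₀, rfl, hmem⟩ := hstep
      have := mem_size_le_msSize hmem
      have h2 : (prodM M₀).size = msSize M₀ := prodM_size M₀
      simp only [Proc.size]
      omega

lemma occIn_sub {x y : Proc A} (h : OccIn x y) : SubP x y := by
  induction h with
  | refl => exact SubP.refl _
  | tail _ hstep ih =>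
      obtain ⟨b, M₀, rfl, hmem⟩ := hstep
      exact subP_trans ih (SubP.pre b (subP_prodM_mem hmem))

lemma sub_er {a : A} {N : Proc A} {X W : Proc A} (hsub : SubP W X) (hfin : X.IsFin)
    {c : A} {Hw : Proc A} (hW : W = Proc.pre c Hw)
    (hdel : EqD W (Proc.reps 1 (Proc.pre a N))) :
    ∃ Y, Er a N X Y ∧ Y.size + W.size = X.size := by
  induction hsub with
  | refl =>
      subst hW
      exact ⟨Proc.nil, Er.del c Hw 1 hdel, by simp [Proc.size]⟩
  | @pre p d hs ih =>
      obtain ⟨Y, hE, hsz⟩ := ih hfin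
      exact ⟨Proc.pre d Y, Er.pre d hE, by simp [Proc.size]; omega⟩
  | @parL p q hs ih =>
      obtain ⟨Y, hE, hsz⟩ := ih hfin.1
      exact ⟨Proc.par Y q, Er.par hE (er_refl hfin.2), by simp [Proc.size]; omega⟩
  | @parR q p hs ih =>
      obtain ⟨Y, hE, hsz⟩ := ih hfin.2
      exact ⟨Proc.par p Y, Er.par (er_refl hfin.1) hE, by simp [Proc.size]; omega⟩

lemma step_atom {X X₁ : Proc A} {e : A} (hs : Step X e X₁) (hfin : X.IsFin) :
    ∀ T ∈ nf X₁, ∃ T' ∈ nf X, OccIn T T' := by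
  induction hs with
  | @pre c p =>
      intro T hT
      obtain ⟨M₀, j, hj, hnf, hnfp⟩ := nf_pre_char c p
      rw [hnfp] at hT
      have hAmem : Proc.pre c (prodM M₀) ∈ nf (Proc.pre c p) := by
        rw [hnf]; exact Multiset.mem_replicate.mpr ⟨by omega, rfl⟩
      rcases Multiset.mem_add.mp hT with h | h
      · exact ⟨_, hAmem, Relation.ReflTransGen.single ⟨c, M₀, rfl, h⟩⟩
      · have := Multiset.eq_of_mem_replicate h
        subst this
        exact ⟨_, hAmem, Relation.ReflTransGen.refl⟩
  | repl => exact hfin.elim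
  | @parL p e' p' q hstep ih =>
      intro T hT
      rcases Multiset.mem_add.mp hT with h | h
      · obtain ⟨T', hT', hocc⟩ := ih hfin.1 T h
        exact ⟨T', Multiset.mem_add.mpr (Or.inl hT'), hocc⟩
      · exact ⟨T, Multiset.mem_add.mpr (Or.inr h), Relation.ReflTransGen.refl⟩
  | @parR q e' q' p hstep ih =>
      intro T hT
      rcases Multiset.mem_add.mp hT with h | h
      · exact ⟨T, Multiset.mem_add.mpr (Or.inl h), Relation.ReflTransGen.refl⟩
      · obtain ⟨T', hT', hocc⟩ := ih hfin.2 T h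
        exact ⟨T', Multiset.mem_add.mpr (Or.inr hT'), hocc⟩

lemma nsteps_atom {X Z : Proc A} {k : ℕ} (htr : NSteps X k Z) (hfin : X.IsFin) :
    ∀ T ∈ nf Z, ∃ T' ∈ nf X, OccIn T T' := by
  induction htr with
  | zero => exact fun T hT => ⟨T, hT, Relation.ReflTransGen.refl⟩
  | @succ p e p' k q hs htr ih =>
      intro T hT
      obtain ⟨T₁, hT₁, h1⟩ := ih (step_fin hs hfin) T hT
      obtain ⟨T₂, hT₂, h2⟩ := step_atom hs hfin T₁ hT₁
      exact ⟨T₂, hT₂, h1.trans h2⟩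

/-! ### emissions of replicated processes -/

lemma replOnly_step {S Z : Proc A} {e : A} (hro : ReplOnly S) (hs : Step S e Z) :
    ∃ g, TopRepl S e g ∧ EqD Z (Proc.par S g) ∧ g.IsFin := by
  induction hs with
  | pre => exact hro.elim
  | repl =>
      exact ⟨_, TopRepl.repl _ _, EqD.refl _, hro⟩
  | @parL p e' p' q hstep ih =>
      obtain ⟨g, hT, hEq, hfin⟩ := ih hro.1
      exact ⟨g, TopRepl.parL q hT, (eqD_parL hEq).trans (eqD_rot p g q), hfin⟩
  | @parR q e' q' p hstep ih =>
      obtain ⟨g, hT, hEq, hfin⟩ := ih hro.2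
      exact ⟨g, TopRepl.parR p hT, (eqD_parR hEq).trans (EqD.parAssoc p q g).symm, hfin⟩

lemma topRepl_step {S : Proc A} {a : A} {G : Proc A} (h : TopRepl S a G) :
    ∃ Z, Step S a Z ∧ EqD Z (Proc.par S G) := by
  induction h with
  | repl a p => exact ⟨_, Step.repl, EqD.refl _⟩
  | @parL p a r q _ ih =>
      obtain ⟨Z, hs, hEq⟩ := ih
      exact ⟨Proc.par Z q, Step.parL q hs, (eqD_parL hEq).trans (eqD_rot p r q)⟩
  | @parR q a r p _ ih =>
      obtain ⟨Z, hs, hEq⟩ := ih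
      exact ⟨Proc.par p Z, Step.parR p hs, (eqD_parR hEq).trans (EqD.parAssoc p q r).symm⟩

end Aux
end CCS
namespace CCS
namespace Aux

open Proc

variable {A : Type}

/-! ### pruning inside replicated components -/

def ErB (a : A) (N : Proc A) (p q : Proc A) : Prop :=
  ∃ p', EqD p p' ∧ Er a N p' q

inductive ErR (a : A) (N : Proc A) : Proc A → Proc A → Prop
  | nil : ErR a N Proc.nil Proc.nil
  | par {p q p' q' : Proc A} : ErR a N p p' → ErR a N q q' →
      ErR a N (Proc.par p q) (Proc.par p' q')
  | repl (c : A) {p q : Proc A} : ErB a N p q → ErR a N (Proc.repl c p) (Proc.repl c q)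

lemma erB_refl {a : A} {N : Proc A} {p : Proc A} (h : p.IsFin) : ErB a N p p :=
  ⟨p, EqD.refl p, er_refl h⟩

lemma errR_refl {a : A} {N : Proc A} {S : Proc A} (h : ReplOnly S) : ErR a N S S := by
  induction S with
  | nil => exact ErR.nil
  | pre c p ih => exact h.elim
  | par p q ih1 ih2 => exact ErR.par (ih1 h.1) (ih2 h.2)
  | repl c p ih => exact ErR.repl c (erB_refl h)

lemma errR_replOnly {a : A} {N : Proc A} {S S' : Proc A} (h : ErR a N S S')
    (hro : ReplOnly S) : ReplOnly S' := by
  induction h with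
  | nil => trivial
  | par _ _ ih1 ih2 => exact ⟨ih1 hro.1, ih2 hro.2⟩
  | repl c hb => obtain ⟨p', _, h⟩ := hb; exact er_fin_r h

lemma errStepF {a : A} {N : Proc A} {S S' : Proc A} (hro : ReplOnly S)
    (hRR : ErR a N S S') {e : A} {Z : Proc A} (hs : Step S e Z) :
    ∃ Z' g g', Step S' e Z' ∧ EqD Z (Proc.par S g) ∧ EqD Z' (Proc.par S' g') ∧
      ErB a N g g' ∧ g.IsFin ∧ g'.IsFin := by
  induction hRR generalizing Z with
  | nil => exact (step_nil_elim hs).elim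
  | @par p q p' q' h1 h2 ih1 ih2 =>
      rcases step_par_inv hs with ⟨p₁, hsp, rfl⟩ | ⟨q₁, hsq, rfl⟩
      · obtain ⟨Z1', g, g', hs', he1, he2, hb, hf1, hf2⟩ := ih1 hro.1 hsp
        exact ⟨Proc.par Z1' q', g, g', Step.parL q' hs',
          (eqD_parL he1).trans (eqD_rot p g q),
          (eqD_parL he2).trans (eqD_rot p' g' q'), hb, hf1, hf2⟩
      · obtain ⟨Z1', g, g', hs', he1, he2, hb, hf1, hf2⟩ := ih2 hro.2 hsq
        exact ⟨Proc.par p' Z1', g, g', Step.parR p' hs',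
          (eqD_parR he1).trans (EqD.parAssoc p q g).symm,
          (eqD_parR he2).trans (EqD.parAssoc p' q' g').symm, hb, hf1, hf2⟩
  | @repl c p q hb =>
      cases hs
      obtain ⟨pb, hbe, hber⟩ := hb
      exact ⟨_, p, q, Step.repl, EqD.refl _, EqD.refl _,
        ⟨pb, hbe, hber⟩, hro, er_fin_r hber⟩

lemma errStepB {a : A} {N : Proc A} {S S' : Proc A} (hro : ReplOnly S)
    (hRR : ErR a N S S') {e : A} {Z' : Proc A} (hs : Step S' e Z') :
    ∃ Z g g', Step S e Z ∧ EqD Z (Proc.par S g) ∧ EqD Z' (Proc.par S' g') ∧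
      ErB a N g g' ∧ g.IsFin ∧ g'.IsFin := by
  induction hRR generalizing Z' with
  | nil => exact (step_nil_elim hs).elim
  | @par p q p' q' h1 h2 ih1 ih2 =>
      rcases step_par_inv hs with ⟨p₁, hsp, rfl⟩ | ⟨q₁, hsq, rfl⟩
      · obtain ⟨Z1, g, g', hs', he1, he2, hb, hf1, hf2⟩ := ih1 hro.1 hsp
        exact ⟨Proc.par Z1 q, g, g', Step.parL q hs',
          (eqD_parL he1).trans (eqD_rot p g q),
          (eqD_parL he2).trans (eqD_rot p' g' q'), hb, hf1, hf2⟩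
      · obtain ⟨Z1, g, g', hs', he1, he2, hb, hf1, hf2⟩ := ih2 hro.2 hsq
        exact ⟨Proc.par p Z1, g, g', Step.parR p hs',
          (eqD_parR he1).trans (EqD.parAssoc p q g).symm,
          (eqD_parR he2).trans (EqD.parAssoc p' q' g').symm, hb, hf1, hf2⟩
  | @repl c p q hb =>
      cases hs
      obtain ⟨pb, hbe, hber⟩ := hb
      exact ⟨_, p, q, Step.repl, EqD.refl _, EqD.refl _,
        ⟨pb, hbe, hber⟩, hro, er_fin_r hber⟩

/-- Replace one top-level replicated component. -/
lemma replace {a : A} {N : Proc A} {S : Proc A} {c : A} {B : Proc A}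
    (hro : ReplOnly S) (hTR : TopRepl S c B) {B' : Proc A}
    (hb : ErB a N B B') :
    ∃ S', ErR a N S S' ∧ ReplOnly S' ∧ S'.size + B.size = S.size + B'.size ∧
      TopRepl S' c B' ∧
      (∀ a' G', TopRepl S a' G' → TopRepl S' a' G' ∨ (a' = c ∧ G' = B)) := by
  induction hTR with
  | repl c B =>
      have hfinB' : B'.IsFin := by obtain ⟨pb, _, hber⟩ := hb; exact er_fin_r hber
      refine ⟨Proc.repl c B', ErR.repl c hb, hfinB', by simp [Proc.size]; omega,
        TopRepl.repl c B', ?_⟩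
      intro a' G' h
      cases h
      exact Or.inr ⟨rfl, rfl⟩
  | @parL p _ _ q hT ih =>
      obtain ⟨p', hE, hro', hsz, hTR', hpres⟩ := ih hro.1 hb
      refine ⟨Proc.par p' q, ErR.par hE (errR_refl hro.2), ⟨hro', hro.2⟩,
        by simp [Proc.size] at hsz ⊢; omega, TopRepl.parL q hTR', ?_⟩
      intro a' G' h
      cases h with
      | parL _ h' =>
          rcases hpres a' G' h' with h'' | h''
          · exact Or.inl (TopRepl.parL q h'')
          · exact Or.inr h''
      | parR _ h' => exact Or.inl (TopRepl.parR p' h')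
  | @parR q _ _ p hT ih =>
      obtain ⟨q', hE, hro', hsz, hTR', hpres⟩ := ih hro.2 hb
      refine ⟨Proc.par p q', ErR.par (errR_refl hro.1) hE, ⟨hro.1, hro'⟩,
        by simp [Proc.size] at hsz ⊢; omega, TopRepl.parR p hTR', ?_⟩
      intro a' G' h
      cases h with
      | parL _ h' => exact Or.inl (TopRepl.parL q' h')
      | parR _ h' =>
          rcases hpres a' G' h' with h'' | h''
          · exact Or.inl (TopRepl.parR p h'')
          · exact Or.inr h''

/-- After `k` steps, a replicated-only process is `≡D` itself in parallel with a
finite process all of whose atoms occur inside emitted bodies. -/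
lemma trace_emit {S : Proc A} (hro : ReplOnly S) {k : ℕ} {Z : Proc A}
    (htr : NSteps S k Z) :
    ∃ E, E.IsFin ∧ EqD Z (Proc.par S E) ∧
      (∀ T ∈ nf E, ∃ c Gc T', TopRepl S c Gc ∧ T' ∈ nf Gc ∧ OccIn T T') := by
  suffices h : ∀ (X : Proc A) (E₀ : Proc A), E₀.IsFin → EqD X (Proc.par S E₀) →
      (∀ T ∈ nf E₀, ∃ c Gc T', TopRepl S c Gc ∧ T' ∈ nf Gc ∧ OccIn T T') →
      ∀ {k Z}, NSteps X k Z →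
      ∃ E, E.IsFin ∧ EqD Z (Proc.par S E) ∧
        (∀ T ∈ nf E, ∃ c Gc T', TopRepl S c Gc ∧ T' ∈ nf Gc ∧ OccIn T T') by
    refine h S Proc.nil trivial (EqD.parNil S).symm (by simp [nf]) htr
  intro X E₀ hfin hXE hprov k Z htr
  induction htr generalizing E₀ with
  | zero => exact ⟨E₀, hfin, hXE, hprov⟩
  | @succ p e p' k q hs htr ih =>
      obtain ⟨W, hsW, hW⟩ := eqD_step hXE hs
      rcases step_par_inv hsW with ⟨S₁, hsS, rfl⟩ | ⟨E₁, hsE, rfl⟩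
      · -- a replicated component fired
        obtain ⟨g, hTg, hEq, hgfin⟩ := replOnly_step hro hsS
        have hXE' : EqD p' (Proc.par S (Proc.par g E₀)) :=
          hW.trans ((eqD_parL hEq).trans (EqD.parAssoc S g E₀))
        refine ih (Proc.par g E₀) ⟨hgfin, hfin⟩ hXE' ?_
        intro T hT
        rcases Multiset.mem_add.mp hT with h | h
        · exact ⟨_, g, T, hTg, h, Relation.ReflTransGen.refl⟩
        · exact hprov T h
      · -- the finite part fired
        have hXE' : EqD p' (Proc.par S E₁) := hW
        refine ih E₁ (step_fin hsE hfin) hXE' ?_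
        intro T hT
        obtain ⟨T₁, hT₁, hocc⟩ := step_atom hsE hfin T hT
        obtain ⟨c, Gc, T', hTR, hmem, hocc'⟩ := hprov T₁ hT₁
        exact ⟨c, Gc, T', hTR, hmem, hocc.trans hocc'⟩

end Aux
end CCS
namespace CCS
namespace Aux

open Proc

variable {A : Type}

/-! ### the main bisimulation -/

lemma decomp_of_eqD_reps {a : A} {N G : Proc A} {m : ℕ}
    (h : EqD (Proc.pre a G) (Proc.reps m (Proc.pre a N))) :
    EqD G (Proc.par N (Proc.reps (m - 1) (Proc.pre a N))) := by
  obtain ⟨Z, hsZ, hGZ⟩ := eqD_step h Step.pre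
  obtain ⟨m1, W₁, hm1, hsW, hZeq⟩ := reps_step_inv hsZ
  obtain ⟨-, hW⟩ := step_pre_inv hsW
  rw [hW] at hZeq
  have hm' : m - 1 = m1 := by omega
  rw [hm']
  exact hGZ.trans hZeq

lemma shuffle_emit (S' Y N : Proc A) (i v : ℕ) (W : Proc A) :
    EqD (Proc.par (Proc.par S' (Proc.par N (Proc.reps i W))) Y |>.par (Proc.reps v W))
        (Proc.par (Proc.par S' (Proc.par N Y)) (Proc.reps (i + v) W)) := by
  have h1 : EqD (Proc.par S' (Proc.par N (Proc.reps i W)))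
      (Proc.par (Proc.par S' N) (Proc.reps i W)) := (EqD.parAssoc S' N _).symm
  have h2 : EqD (Proc.par (Proc.par (Proc.par S' N) (Proc.reps i W)) Y)
      (Proc.par (Proc.par (Proc.par S' N) Y) (Proc.reps i W)) := eqD_rot _ _ _
  have h3 : EqD (Proc.par (Proc.par (Proc.par (Proc.par S' N) Y) (Proc.reps i W)) (Proc.reps v W))
      (Proc.par (Proc.par (Proc.par S' N) Y) (Proc.reps (i + v) W)) :=
    (EqD.parAssoc _ _ _).trans (eqD_parR (eqD_reps_add i v W))
  have h4 : EqD (Proc.par (Proc.par S' N) Y) (Proc.par S' (Proc.par N Y)) :=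
    EqD.parAssoc S' N Y
  exact (eqD_parL ((eqD_parL h1).trans h2)).trans (h3.trans (eqD_parL h4))

lemma shuffle_copy (S X N : Proc A) (u' : ℕ) (W : Proc A) :
    EqD (Proc.par (Proc.par S X) (Proc.par N (Proc.reps u' W)))
        (Proc.par (Proc.par S (Proc.par N X)) (Proc.reps u' W)) := by
  have h1 : EqD (Proc.par (Proc.par S X) (Proc.par N (Proc.reps u' W)))
      (Proc.par (Proc.par (Proc.par S X) N) (Proc.reps u' W)) := (EqD.parAssoc _ _ _).symm
  have h2 : EqD (Proc.par (Proc.par S X) N) (Proc.par S (Proc.par N X)) :=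
    (EqD.parAssoc S X N).trans (eqD_parR (EqD.parComm X N))
  exact h1.trans (eqD_parL h2)

lemma respond {a : A} {N : Proc A} {S₀ H₀ : Proc A} {m₀ : ℕ}
    (hT : TopRepl S₀ a H₀) (hHd : EqD (Proc.pre a H₀) (Proc.reps m₀ (Proc.pre a N)))
    (Y : Proc A) (v : ℕ) :
    ∃ ZZ, Step (Proc.par (Proc.par S₀ Y) (Proc.reps v (Proc.pre a N))) a ZZ ∧
      EqD ZZ (Proc.par (Proc.par S₀ (Proc.par N Y))
        (Proc.reps (m₀ - 1 + v) (Proc.pre a N))) := by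
  obtain ⟨Zs, hsS, hZs⟩ := topRepl_step hT
  have hHN : EqD H₀ (Proc.par N (Proc.reps (m₀ - 1) (Proc.pre a N))) :=
    decomp_of_eqD_reps hHd
  refine ⟨Proc.par (Proc.par Zs Y) (Proc.reps v (Proc.pre a N)),
    Step.parL _ (Step.parL _ hsS), ?_⟩
  have hc : EqD (Proc.par Zs Y)
      (Proc.par (Proc.par S₀ (Proc.par N (Proc.reps (m₀ - 1) (Proc.pre a N)))) Y) :=
    eqD_parL (hZs.trans (eqD_parR hHN))
  exact (eqD_parL hc).trans (shuffle_emit S₀ Y N (m₀ - 1) v (Proc.pre a N))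

/-- The main relation. -/
def MRel (a : A) (N S S' : Proc A) (P Q : Proc A) : Prop :=
  ∃ X Y u v, Er a N X Y ∧
    EqD P (Proc.par (Proc.par S X) (Proc.reps u (Proc.pre a N))) ∧
    EqD Q (Proc.par (Proc.par S' Y) (Proc.reps v (Proc.pre a N)))

section Main

variable {a : A} {N G H' S S' : Proc A} {m m' : ℕ}

lemma mrel_left_step (hro : ReplOnly S) (hRR : ErR a N S S') (hNfin : N.IsFin)
    (hTH : TopRepl S' a H') (hHd : EqD (Proc.pre a H') (Proc.reps m' (Proc.pre a N)))
    {P Q : Proc A} (hM : MRel a N S S' P Q) {e : A} {P₁ : Proc A}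
    (hstep : Step P e P₁) : ∃ Q₁, Step Q e Q₁ ∧ MRel a N S S' P₁ Q₁ := by
  obtain ⟨X, Y, u, v, hEr, hP, hQ⟩ := hM
  obtain ⟨Z, hsZ, hPZ⟩ := eqD_step hP hstep
  rcases step_par_inv hsZ with ⟨W, hsW, rfl⟩ | ⟨Zr, hsr, rfl⟩
  · rcases step_par_inv hsW with ⟨S₁, hsS, rfl⟩ | ⟨X₁, hsX, rfl⟩
    · -- a component of S fired
      obtain ⟨Z', g, g', hs', he1, he2, ⟨g₀, hge, hger⟩, hf1, hf2⟩ := errStepF hro hRR hsS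
      have hstepQc : Step (Proc.par (Proc.par S' Y) (Proc.reps v (Proc.pre a N))) e
          (Proc.par (Proc.par Z' Y) (Proc.reps v (Proc.pre a N))) :=
        Step.parL _ (Step.parL _ hs')
      obtain ⟨Q₁, hsQ, hQZ⟩ := eqD_step hQ.symm hstepQc
      refine ⟨Q₁, hsQ, Proc.par g₀ X, Proc.par g' Y, u, v, Er.par hger hEr, ?_, ?_⟩
      · refine hPZ.trans (eqD_parL ?_)
        refine (eqD_parL he1).trans ?_
        refine (EqD.parAssoc S g X).trans (eqD_parR (eqD_parL hge))
      · refine hQZ.symm.trans (eqD_parL ?_)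
        exact (eqD_parL he2).trans (EqD.parAssoc S' g' Y)
    · -- the finite part X fired
      rcases er_fwd hNfin hEr hsX with ⟨Y₁, hsY, X₀, Y₀, e1, her0, e2⟩ | ⟨rfl, X₀, Y₀, e1, her0, e2⟩
      · have hstepQc : Step (Proc.par (Proc.par S' Y) (Proc.reps v (Proc.pre a N))) e
            (Proc.par (Proc.par S' Y₁) (Proc.reps v (Proc.pre a N))) :=
          Step.parL _ (Step.parR _ hsY)
        obtain ⟨Q₁, hsQ, hQZ⟩ := eqD_step hQ.symm hstepQc
        refine ⟨Q₁, hsQ, X₀, Y₀, u, v, her0, ?_, ?_⟩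
        · exact hPZ.trans (eqD_parL (eqD_parR e1))
        · exact hQZ.symm.trans (eqD_parL (eqD_parR e2.symm))
      · -- a deleted piece fired (action a); respond with the replicated a-component of S'
        obtain ⟨ZZ, hsZZ, hZZ⟩ := respond hTH hHd Y v
        obtain ⟨Q₁, hsQ, hQZ⟩ := eqD_step hQ.symm hsZZ
        refine ⟨Q₁, hsQ, X₀, Y₀, u, m' - 1 + v, her0, ?_, ?_⟩
        · exact hPZ.trans (eqD_parL (eqD_parR e1))
        · exact hQZ.symm.trans (hZZ.trans (eqD_parL (eqD_parR e2.symm)))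
  · -- a copy of `a.N` fired on the left
    obtain ⟨u', W₁, hu, hsW, hZr⟩ := reps_step_inv hsr
    obtain ⟨he, hW⟩ := step_pre_inv hsW
    rw [hW] at hZr
    subst he
    obtain ⟨ZZ, hsZZ, hZZ⟩ := respond hTH hHd Y v
    obtain ⟨Q₁, hsQ, hQZ⟩ := eqD_step hQ.symm hsZZ
    refine ⟨Q₁, hsQ, Proc.par N X, Proc.par N Y, u', m' - 1 + v,
      Er.par (er_refl hNfin) hEr, ?_, ?_⟩
    · exact hPZ.trans ((eqD_parR hZr).trans (shuffle_copy S X N u' _))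
    · exact hQZ.symm.trans hZZ

lemma mrel_right_step (hro : ReplOnly S) (hRR : ErR a N S S') (hNfin : N.IsFin)
    (hTG : TopRepl S a G) (hGd : EqD (Proc.pre a G) (Proc.reps m (Proc.pre a N)))
    {P Q : Proc A} (hM : MRel a N S S' P Q) {e : A} {Q₁ : Proc A}
    (hstep : Step Q e Q₁) : ∃ P₁, Step P e P₁ ∧ MRel a N S S' P₁ Q₁ := by
  obtain ⟨X, Y, u, v, hEr, hP, hQ⟩ := hM
  obtain ⟨Z, hsZ, hQZ⟩ := eqD_step hQ hstep
  rcases step_par_inv hsZ with ⟨W, hsW, rfl⟩ | ⟨Zr, hsr, rfl⟩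
  · rcases step_par_inv hsW with ⟨S₁, hsS, rfl⟩ | ⟨Y₁, hsY, rfl⟩
    · obtain ⟨Z0, g, g', hs0, he1, he2, ⟨g₀, hge, hger⟩, hf1, hf2⟩ := errStepB hro hRR hsS
      have hstepPc : Step (Proc.par (Proc.par S X) (Proc.reps u (Proc.pre a N))) e
          (Proc.par (Proc.par Z0 X) (Proc.reps u (Proc.pre a N))) :=
        Step.parL _ (Step.parL _ hs0)
      obtain ⟨P₁, hsP, hPZ⟩ := eqD_step hP.symm hstepPc
      refine ⟨P₁, hsP, Proc.par g₀ X, Proc.par g' Y, u, v, Er.par hger hEr, ?_, ?_⟩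
      · refine hPZ.symm.trans (eqD_parL ?_)
        exact (eqD_parL he1).trans ((EqD.parAssoc S g X).trans (eqD_parR (eqD_parL hge)))
      · refine hQZ.trans (eqD_parL ?_)
        exact (eqD_parL he2).trans (EqD.parAssoc S' g' Y)
    · obtain ⟨X₁, hsX, X₀, Y₀, e1, her0, e2⟩ := er_bwd hEr hsY
      have hstepPc : Step (Proc.par (Proc.par S X) (Proc.reps u (Proc.pre a N))) e
          (Proc.par (Proc.par S X₁) (Proc.reps u (Proc.pre a N))) :=
        Step.parL _ (Step.parR _ hsX)
      obtain ⟨P₁, hsP, hPZ⟩ := eqD_step hP.symm hstepPc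
      refine ⟨P₁, hsP, X₀, Y₀, u, v, her0, ?_, ?_⟩
      · exact hPZ.symm.trans (eqD_parL (eqD_parR e1))
      · exact hQZ.trans (eqD_parL (eqD_parR e2.symm))
  · -- a copy of `a.N` fired on the right; respond with the replicated a-component of S
    obtain ⟨v', W₁, hv, hsW, hZr⟩ := reps_step_inv hsr
    obtain ⟨he, hW⟩ := step_pre_inv hsW
    rw [hW] at hZr
    subst he
    obtain ⟨ZZ, hsZZ, hZZ⟩ := respond hTG hGd X u
    obtain ⟨P₁, hsP, hPZ⟩ := eqD_step hP.symm hsZZ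
    refine ⟨P₁, hsP, Proc.par N X, Proc.par N Y, m - 1 + u, v',
      Er.par (er_refl hNfin) hEr, ?_, ?_⟩
    · exact hPZ.symm.trans hZZ
    · exact hQZ.trans ((eqD_parR hZr).trans (shuffle_copy S' Y N v' _))

/-- The main lemma: pruning absorbable material preserves bisimilarity. -/
lemma main_bisim (hro : ReplOnly S) (hRR : ErR a N S S') (hNfin : N.IsFin)
    (hTG : TopRepl S a G) (hGd : EqD (Proc.pre a G) (Proc.reps m (Proc.pre a N)))
    (hTH : TopRepl S' a H') (hHd : EqD (Proc.pre a H') (Proc.reps m' (Proc.pre a N)))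
    {X Y : Proc A} (hEr : Er a N X Y) :
    Bisim (Proc.par S X) (Proc.par S' Y) := by
  refine ⟨fun P Q => MRel a N S S' P Q ∨ MRel a N S S' Q P, ⟨?_, ?_⟩, Or.inl ?_⟩
  · intro P Q h; tauto
  · rintro P Q (h | h) e P₁ hs
    · obtain ⟨Q₁, hsQ, hM⟩ := mrel_left_step hro hRR hNfin hTH hHd h hs
      exact ⟨Q₁, hsQ, Or.inl hM⟩
    · obtain ⟨Q₁, hsQ, hM⟩ := mrel_right_step hro hRR hNfin hTG hGd h hs
      exact ⟨Q₁, hsQ, Or.inr hM⟩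
  · exact ⟨X, Y, 0, 0, hEr, (EqD.parNil _).symm, (EqD.parNil _).symm⟩

end Main

end Aux
end CCS
namespace CCS
namespace Aux

open Proc

variable {A : Type}

lemma eqD_atom_reps {a : A} {G : Proc A} (hfin : G.IsFin) {M₀ : Multiset (Proc A)} {mm : ℕ}
    (hnfpre : nf (Proc.pre a G) = Multiset.replicate mm (Proc.pre a (prodM M₀))) :
    EqD (Proc.pre a G) (Proc.reps mm (Proc.pre a (prodM M₀))) := by
  refine (eqD_nf (show (Proc.pre a G).IsFin from hfin)).trans ?_
  rw [hnfpre]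
  exact eqD_prodM_replicate _ _

/-- Part (i). -/
lemma part_i {S F : Proc A} (hro : ReplOnly S) (hFfin : F.IsFin)
    (hseed : IsSeed (Proc.par S F)) : Dis S F := by
  intro a G hTG k hred
  obtain ⟨F'', hNS, hF''⟩ := hred
  have hGfin : G.IsFin := replOnly_topRepl_fin hro hTG
  have hpreGfin : (Proc.pre a G).IsFin := hGfin
  obtain ⟨M₀, mm, hmm, hnfpre, hnfG⟩ := nf_pre_char a G
  set N : Proc A := prodM M₀ with hN
  have hANfin : (Proc.pre a N).IsFin := by
    have hmem : Proc.pre a N ∈ nf (Proc.pre a G) := by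
      rw [hnfpre]; exact Multiset.mem_replicate.mpr ⟨by omega, rfl⟩
    exact nf_fin hpreGfin _ hmem
  have hNfin : N.IsFin := hANfin
  have hGd : EqD (Proc.pre a G) (Proc.reps mm (Proc.pre a N)) := eqD_atom_reps hGfin hnfpre
  have hnfF'' : nf F'' = Multiset.replicate mm (Proc.pre a N) := by
    rw [nf_eqD hF'']; exact hnfpre
  have hall : ∀ x ∈ nf F'', x = Proc.pre a N := by
    intro x hx; rw [hnfF''] at hx; exact Multiset.eq_of_mem_replicate hx
  obtain ⟨Y, hEr, hYsz⟩ := extract hNS hFfin hall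
  have hbis : Bisim (Proc.par S F) (Proc.par S Y) :=
    main_bisim hro (errR_refl hro) hNfin hTG hGd hTG hGd hEr
  have hWfSF : Proc.Wf (Proc.par S F) := hseed.1
  have hq : Proc.Wf (Proc.par S Y) := ⟨hWfSF.1, wf_of_fin (er_fin_r hEr)⟩
  have hle := hseed.2 (Proc.par S Y) hq (bisim_symm hbis)
  have h1 : F.size = F''.size + k := nsteps_size hNS hFfin
  have h2 : F''.size = (Proc.pre a G).size := eqD_size hF''
  have h3 : (Proc.pre a G).size = G.size + 1 := rfl
  simp only [Proc.size] at hle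
  omega

/-- Part (ii). -/
lemma part_ii {S R : Proc A} (hro : ReplOnly S) (hseed : IsSeed S) (hRfin : R.IsFin)
    (hpurg : Purg S R) : Dis S R := by
  classical
  intro a G hTG i hred
  obtain ⟨k, hk, Zp, hNSp, hZeq⟩ := hpurg
  obtain ⟨E, hEfin, hZE, hprov⟩ := trace_emit hro hNSp
  have hnfRE : nf R = nf E := by
    have h := nf_eqD ((hZE.symm).trans hZeq)
    simp only [nf, nf_replOnly hro, zero_add] at h
    exact h.symm
  obtain ⟨R', hNSR, hR'⟩ := hred
  have hGfin : G.IsFin := replOnly_topRepl_fin hro hTG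
  have hpreGfin : (Proc.pre a G).IsFin := hGfin
  obtain ⟨M₀, mm, hmm, hnfpre, hnfG⟩ := nf_pre_char a G
  set N : Proc A := prodM M₀ with hN
  have hANfin : (Proc.pre a N).IsFin := by
    have hmem : Proc.pre a N ∈ nf (Proc.pre a G) := by
      rw [hnfpre]; exact Multiset.mem_replicate.mpr ⟨by omega, rfl⟩
    exact nf_fin hpreGfin _ hmem
  have hNfin : N.IsFin := hANfin
  have hGd : EqD (Proc.pre a G) (Proc.reps mm (Proc.pre a N)) := eqD_atom_reps hGfin hnfpre
  have hszG : G.size + 1 = mm * (N.size + 1) := by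
    have := eqD_size hGd
    rw [reps_size] at this
    exact this
  have hA₀R' : Proc.pre a N ∈ nf R' := by
    rw [nf_eqD hR', hnfpre]
    exact Multiset.mem_replicate.mpr ⟨by omega, rfl⟩
  obtain ⟨T₀, hT₀R, hocc1⟩ := nsteps_atom hNSR hRfin _ hA₀R'
  have hT₀E : T₀ ∈ nf E := by rwa [hnfRE] at hT₀R
  obtain ⟨c, Gc, T', hTRc, hT'Gc, hocc2⟩ := hprov T₀ hT₀E
  have hocc : OccIn (Proc.pre a N) T' := hocc1.trans hocc2
  have hGcfin : Gc.IsFin := replOnly_topRepl_fin hro hTRc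
  by_cases hm2 : 2 ≤ mm
  · -- `!a.G` is itself compressible: prune one copy of `a.N` from `G`
    have hmemG : Proc.pre a N ∈ nf G := by
      rw [hnfG]
      exact Multiset.mem_add.mpr (Or.inr (Multiset.mem_replicate.mpr ⟨by omega, rfl⟩))
    set L : List (Proc A) := (nf G).toList with hL
    have hmemL : Proc.pre a N ∈ L := Multiset.mem_toList.mpr hmemG
    obtain ⟨s, t, hLst⟩ := List.append_of_mem hmemL
    have hperm : L.Perm (Proc.pre a N :: (s ++ t)) := by
      rw [hLst]; exact List.perm_middle
    have hLfin : ∀ x ∈ L, Proc.IsFin x := by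
      intro x hx
      exact nf_fin hGfin x (Multiset.mem_toList.mp hx)
    have hfinrest : (prodL (s ++ t)).IsFin := by
      refine prodL_fin fun x hx => hLfin x ?_
      rw [hLst]
      simp only [List.mem_append, List.mem_cons] at hx ⊢
      tauto
    have h1 : EqD G (prodL (Proc.pre a N :: (s ++ t))) := by
      refine (eqD_nf hGfin).trans ?_
      exact eqD_prodL_perm hperm
    set Yb : Proc A := Proc.par Proc.nil (prodL (s ++ t)) with hYb
    have hErb : Er a N (prodL (Proc.pre a N :: (s ++ t))) Yb :=
      Er.par (Er.del a N 1 (EqD.symm (EqD.parNil _))) (er_refl hfinrest)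
    have hErB : ErB a N G Yb := ⟨_, h1, hErb⟩
    have hcoe : ((s ++ t : List (Proc A)) : Multiset (Proc A)) =
        M₀ + Multiset.replicate (mm - 2) (Proc.pre a N) := by
      have hLcoe : ((L : List (Proc A)) : Multiset (Proc A)) = nf G := by
        rw [hL]; exact Multiset.coe_toList _
      have h4 : ((L : List (Proc A)) : Multiset (Proc A)) =
          (Proc.pre a N) ::ₘ ((s ++ t : List (Proc A)) : Multiset (Proc A)) := by
        have := Multiset.coe_eq_coe.mpr hperm
        rw [this, Multiset.cons_coe]
      have h3 : Multiset.replicate (mm - 1) (Proc.pre a N) =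
          (Proc.pre a N) ::ₘ Multiset.replicate (mm - 2) (Proc.pre a N) := by
        rw [← Multiset.replicate_succ]
        congr 1
        omega
      have h5 : nf G = (Proc.pre a N) ::ₘ (M₀ + Multiset.replicate (mm - 2) (Proc.pre a N)) := by
        rw [hnfG, h3, Multiset.add_cons]
      have h6 := h4.symm.trans (hLcoe.trans h5)
      exact (Multiset.cons_inj_right _).mp h6
    have hYbEq : EqD Yb (Proc.par N (Proc.reps (mm - 2) (Proc.pre a N))) := by
      refine (eqD_nilL _).trans ?_
      refine (eqD_prodL_of_coe hcoe).symm.trans ?_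
      exact (eqD_prodM_add _ _).trans (eqD_parR (eqD_prodM_replicate _ _))
    have hHd' : EqD (Proc.pre a Yb) (Proc.reps (mm - 1) (Proc.pre a N)) := by
      have hd := (EqD.congPre a hYbEq).trans (EqD.distr a N (mm - 2) hNfin)
      rwa [show mm - 2 + 1 = mm - 1 by omega] at hd
    obtain ⟨S', hRR, hro', hsz, hTH', hpres⟩ := replace hro hTG hErB
    have hbis0 := main_bisim hro hRR hNfin hTG hGd hTH' hHd' Er.nil
    have hbisSS' : Bisim S S' :=
      bisim_trans (bisim_of_eqD (EqD.parNil S).symm)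
        (bisim_trans hbis0 (bisim_of_eqD (EqD.parNil S')))
    have hszYb : Yb.size + 1 = (mm - 1) * (N.size + 1) := by
      have := eqD_size hHd'
      rw [reps_size] at this
      exact this
    have hle := hseed.2 S' (replOnly_wf hro') (bisim_symm hbisSS')
    obtain ⟨t, rfl⟩ : ∃ t, mm = t + 2 := ⟨mm - 2, by omega⟩
    have e1 : (t + 2) * (N.size + 1) = (t + 1) * (N.size + 1) + (N.size + 1) := by ring
    have e2 : t + 2 - 1 = t + 1 := by omega
    rw [e2] at hszYb
    omega
  · -- `mm = 1` : prune the occurrence of `a.N` deep inside `Gc`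
    have hmm1 : mm = 1 := by omega
    have hnfG1 : nf G = M₀ := by
      rw [hnfG, hmm1]
      simp
    -- coincidence `Gc = G` is impossible
    have hnocoin : ¬ (G = Gc) := by
      intro hGGc
      have hs1 : (Proc.pre a N).size ≤ T'.size := occIn_size hocc
      have hs2 : T'.size ≤ msSize (nf Gc) := mem_size_le_msSize hT'Gc
      have hs3 : msSize (nf Gc) = Gc.size := msSize_nf hGcfin
      have hs4 : N.size = msSize M₀ := prodM_size M₀
      have hs5 : msSize (nf G) = msSize M₀ := by rw [hnfG1]
      have hs6 : msSize (nf G) = G.size := msSize_nf hGfin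
      subst hGGc
      have : (Proc.pre a N).size = N.size + 1 := rfl
      omega
    have hsubT : SubP (Proc.pre a N) (prodM (nf Gc)) :=
      subP_trans (occIn_sub hocc) (subP_prodM_mem hT'Gc)
    have hfinGc' : (prodM (nf Gc)).IsFin := prodM_fin (nf_fin hGcfin)
    obtain ⟨Yb, hErY, hszY⟩ := sub_er hsubT hfinGc' rfl (EqD.symm (EqD.parNil _))
    have hErB : ErB a N Gc Yb := ⟨prodM (nf Gc), eqD_nf hGcfin, hErY⟩
    obtain ⟨S', hRR, hro', hsz, _, hpres⟩ := replace hro hTRc hErB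
    rcases hpres a G hTG with hTG' | ⟨hac, hGGc⟩
    · have hbis0 := main_bisim hro hRR hNfin hTG hGd hTG' hGd Er.nil
      have hbisSS' : Bisim S S' :=
        bisim_trans (bisim_of_eqD (EqD.parNil S).symm)
          (bisim_trans hbis0 (bisim_of_eqD (EqD.parNil S')))
      have hle := hseed.2 S' (replOnly_wf hro') (bisim_symm hbisSS')
      have hs3 : (prodM (nf Gc)).size = Gc.size := by
        rw [prodM_size]; exact msSize_nf hGcfin
      have : (Proc.pre a N).size = N.size + 1 := rfl
      omega
    · exact hnocoin hGGc

end Aux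
end CCS

/-- (i) If `S | F` is a seed, then `S ⫫ F`;
(ii) if `S ▷ R`, then `S ⫫ R`. -/
theorem seed_dis_and_purg_dis {A : Type} [Countable A] :
    (∀ S F : CCS.Proc A, CCS.ReplOnly S → F.IsFin →
      CCS.IsSeed (CCS.Proc.par S F) → CCS.Dis S F) ∧
    (∀ S R : CCS.Proc A, CCS.ReplOnly S → CCS.IsSeed S → R.IsFin →
      CCS.Purg S R → CCS.Dis S R) := by
  exact ⟨fun _ _ hro hFfin hseed => CCS.Aux.part_i hro hFfin hseed,
    fun _ _ hro hseed hRfin hpurg => CCS.Aux.part_ii hro hseed hRfin hpurg⟩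
end
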